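/- arXiv:1304.2167 — 11 statements merged into one kernel-verified Lean document; each statement's English description precedes it below -/
import Mathlib

section
/- The ℝ-linear map R(U,V): f ↦ U f + V f* is a bijection of H preserving the real inner product, i.e. Re⟪R(U,V) f, R(U,V) g⟫ = Re⟪f, g⟫ for all f, g ∈ H, if and only if the bounded operators U and V satisfy the orthogonality relations U U† + V V† = I = U† U + Vᵀ V̄ and U Vᵀ + V Uᵀ = 0 = U† V + Vᵀ Ū. -/
open scoped InnerProductSpace
open ContinuousLinearMap

/-- The ℝ-linear map `R(U,V) : f ↦ U f + V f*` is a bijection of `H`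
preserving the real inner product iff `U U† + V V† = I = U† U + Vᵀ V̄` and
`U Vᵀ + V Uᵀ = 0 = U† V + Vᵀ Ū`. -/
theorem orthogonality_relations_iff
    {H : Type*} [NormedAddCommGroup H] [InnerProductSpace ℂ H] [CompleteSpace H]
    [TopologicalSpace.SeparableSpace H]
    -- the antiunitary involution `f ↦ f* = J f`
    (J : H → H)
    (hJ_add : ∀ f g, J (f + g) = J f + J g)
    (hJ_smul : ∀ (c : ℂ) (f : H), J (c • f) = (starRingEnd ℂ) c • J f)
    (hJ_invol : ∀ f, J (J f) = f)
    (hJ_inner : ∀ f g : H, ⟪J f, J g⟫_ℂ = ⟪g, f⟫_ℂ)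
    -- the bounded operators `U`, `V` and their conjugates `Ū`, `V̄` and transposes `Uᵀ`, `Vᵀ`
    (U V Ubar Vbar Ut Vt : H →L[ℂ] H)
    (hUbar : ∀ f, Ubar f = J (U (J f)))
    (hVbar : ∀ f, Vbar f = J (V (J f)))
    (hUt : ∀ f, Ut f = J (adjoint U (J f)))
    (hVt : ∀ f, Vt f = J (adjoint V (J f))) :
    (Function.Bijective (fun f => U f + V (J f)) ∧
        ∀ f g : H, (⟪U f + V (J f), U g + V (J g)⟫_ℂ).re = (⟪f, g⟫_ℂ).re) ↔
      (U ∘L adjoint U + V ∘L adjoint V = 1 ∧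
       adjoint U ∘L U + Vt ∘L Vbar = 1 ∧
       U ∘L Vt + V ∘L Ut = 0 ∧
       adjoint U ∘L V + Vt ∘L Ubar = 0) := by
  classical
  set R : H → H := fun f => U f + V (J f) with hRdef
  set R' : H → H := fun f => adjoint U f + Vt (J f) with hR'def
  have hJ_surj : Function.Surjective J := fun g => ⟨J g, hJ_invol g⟩
  -- splitting lemma: A f + B (J f) = C f for all f iff A = C and B = 0
  have split : ∀ A B C : H →L[ℂ] H, (∀ f, A f + B (J f) = C f) ↔ (A = C ∧ B = 0) := by
    intro A B C
    constructor
    · intro h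
      have hstep : ∀ f, A f - B (J f) = C f := by
        intro f
        have h' := h (Complex.I • f)
        rw [hJ_smul, map_smul, map_smul, map_smul] at h'
        simp only [Complex.conj_I, neg_smul] at h'
        have h'' := congrArg (fun x => (-Complex.I : ℂ) • x) h'
        simp only [smul_add, smul_neg, smul_smul, neg_mul, Complex.I_mul_I, neg_neg,
          one_smul] at h''
        rw [← sub_eq_add_neg] at h''
        exact h''
      have hB : ∀ f, B (J f) = 0 := by
        intro f
        have h1 := h f
        have h2 := hstep f
        have hbb : B (J f) = - B (J f) := by
          have h12 := h1.trans h2.symm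
          rw [sub_eq_add_neg] at h12
          exact add_left_cancel h12
        have h2b : (2 : ℂ) • B (J f) = (2 : ℂ) • (0 : H) := by
          rw [two_smul, smul_zero]
          nth_rewrite 2 [hbb]
          simp
        have h2ne : (2 : ℂ) ≠ 0 := by norm_num
        exact smul_right_injective H h2ne h2b
      have hA : ∀ f, A f = C f := by
        intro f
        have h1 := h f
        rw [hB f, add_zero] at h1
        exact h1
      refine ⟨ContinuousLinearMap.ext hA, ContinuousLinearMap.ext fun g => ?_⟩
      obtain ⟨f, rfl⟩ := hJ_surj g
      simpa using hB f
    · rintro ⟨rfl, rfl⟩ f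
      simp
  -- transposes on conjugated vectors
  have hVtJ : ∀ g, Vt (J g) = J (adjoint V g) := fun g => by rw [hVt, hJ_invol]
  have hUtJ : ∀ g, Ut (J g) = J (adjoint U g) := fun g => by rw [hUt, hJ_invol]
  -- real adjoint relation
  have hadj : ∀ f g, (⟪R f, g⟫_ℂ).re = (⟪f, R' g⟫_ℂ).re := by
    intro f g
    have h1 : ⟪U f, g⟫_ℂ = ⟪f, adjoint U g⟫_ℂ := (adjoint_inner_right U f g).symm
    have h2 : (⟪V (J f), g⟫_ℂ).re = (⟪f, Vt (J g)⟫_ℂ).re := by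
      rw [hVtJ]
      have e1 : ⟪f, J (adjoint V g)⟫_ℂ = ⟪adjoint V g, J f⟫_ℂ := by
        conv_lhs => rw [← hJ_invol f]
        exact hJ_inner (J f) (adjoint V g)
      have e2 : ⟪V (J f), g⟫_ℂ = ⟪J f, adjoint V g⟫_ℂ :=
        (adjoint_inner_right V (J f) g).symm
      rw [e1, e2,
        show ⟪J f, (adjoint V) g⟫_ℂ = (starRingEnd ℂ) ⟪(adjoint V) g, J f⟫_ℂ from
          (inner_conj_symm _ _).symm,
        Complex.conj_re]
    show (⟪U f + V (J f), g⟫_ℂ).re = (⟪f, adjoint U g + Vt (J g)⟫_ℂ).re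
    rw [inner_add_left, inner_add_right, Complex.add_re, Complex.add_re, h1, h2]
  have hadj' : ∀ f g, (⟪f, R g⟫_ℂ).re = (⟪R' f, g⟫_ℂ).re := by
    intro f g
    rw [← inner_conj_symm, Complex.conj_re, hadj, ← inner_conj_symm, Complex.conj_re]
  -- composition formulas
  have hR'R : ∀ f, R' (R f) =
      (adjoint U ∘L U + Vt ∘L Vbar) f + (adjoint U ∘L V + Vt ∘L Ubar) (J f) := by
    intro f
    show adjoint U (U f + V (J f)) + Vt (J (U f + V (J f))) = _
    rw [hJ_add, map_add, map_add]
    have e1 : Vt (J (U f)) = Vt (Ubar (J f)) := by rw [hUbar, hJ_invol]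
    have e2 : Vt (J (V (J f))) = Vt (Vbar f) := by rw [hVbar]
    rw [e1, e2]
    simp only [add_apply, comp_apply]
    abel
  have hRR' : ∀ f, R (R' f) =
      (U ∘L adjoint U + V ∘L adjoint V) f + (U ∘L Vt + V ∘L Ut) (J f) := by
    intro f
    show U (adjoint U f + Vt (J f)) + V (J (adjoint U f + Vt (J f))) = _
    rw [hJ_add, map_add, map_add]
    have e1 : V (J (adjoint U f)) = V (Ut (J f)) := by rw [hUtJ]
    have e2 : V (J (Vt (J f))) = V (adjoint V f) := by rw [hVt, hJ_invol, hJ_invol]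
    rw [e1, e2]
    simp only [add_apply, comp_apply]
    abel
  constructor
  · rintro ⟨hbij, hiso⟩
    have hiso' : ∀ f g, (⟪R f, R g⟫_ℂ).re = (⟪f, g⟫_ℂ).re := hiso
    have hR'Rid : ∀ f, R' (R f) = f := by
      intro f
      have key : ∀ g, (⟪R' (R f) - f, g⟫_ℂ).re = 0 := by
        intro g
        rw [inner_sub_left, Complex.sub_re, ← hadj' (R f) g, hiso']
        ring
      have h0 := key (R' (R f) - f)
      have hnorm : (⟪R' (R f) - f, R' (R f) - f⟫_ℂ).re = ‖R' (R f) - f‖ ^ 2 := by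
        rw [← @inner_self_eq_norm_sq ℂ]
        rfl
      rw [hnorm] at h0
      have := norm_eq_zero.mp (by nlinarith [norm_nonneg (R' (R f) - f)])
      exact sub_eq_zero.mp this
    have hRR'id : ∀ f, R (R' f) = f := by
      intro f
      obtain ⟨x, hx⟩ := hbij.2 f
      have hx' : R x = f := hx
      rw [← hx', hR'Rid x]
    obtain ⟨hA1, hB1⟩ := (split (adjoint U ∘L U + Vt ∘L Vbar) (adjoint U ∘L V + Vt ∘L Ubar) 1).mp
      (fun f => by rw [← hR'R f, hR'Rid f, ContinuousLinearMap.one_apply])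
    obtain ⟨hA2, hB2⟩ := (split (U ∘L adjoint U + V ∘L adjoint V) (U ∘L Vt + V ∘L Ut) 1).mp
      (fun f => by rw [← hRR' f, hRR'id f, ContinuousLinearMap.one_apply])
    exact ⟨hA2, hA1, hB2, hB1⟩
  · rintro ⟨h1, h2, h3, h4⟩
    have hR'Rid : ∀ f, R' (R f) = f := by
      intro f; rw [hR'R f, h2, h4]; simp
    have hRR'id : ∀ f, R (R' f) = f := by
      intro f; rw [hRR' f, h1, h3]; simp
    refine ⟨⟨fun a b hab => ?_, fun g => ⟨R' g, hRR'id g⟩⟩, fun f g => ?_⟩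
    · have hab' : R a = R b := hab
      have := congrArg R' hab'
      rwa [hR'Rid, hR'Rid] at this
    · show (⟪R f, R g⟫_ℂ).re = (⟪f, g⟫_ℂ).re
      rw [hadj' (R f) g, hR'Rid f]
end

section
/- If bounded operators U, V on H satisfy the orthogonality relations U U† + V V† = I = U† U + Vᵀ V̄ and U Vᵀ + V Uᵀ = 0 = U† V + Vᵀ Ū, then R(U†, Vᵀ) ∘ R(U,V) = id_H = R(U,V) ∘ R(U†, Vᵀ); in particular R(U,V) is invertible with inverse R(U†, Vᵀ). -/
open scoped InnerProductSpace
open ContinuousLinearMap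

/-- If `U, V` satisfy the orthogonality relations, then
`R(U†, Vᵀ) ∘ R(U,V) = id = R(U,V) ∘ R(U†, Vᵀ)`; in particular `R(U,V)` is invertible with
inverse `R(U†, Vᵀ)`. -/
theorem R_inverse
    {H : Type*} [NormedAddCommGroup H] [InnerProductSpace ℂ H] [CompleteSpace H]
    [TopologicalSpace.SeparableSpace H]
    -- the antiunitary involution `f ↦ f* = J f`
    (J : H → H)
    (hJ_add : ∀ f g, J (f + g) = J f + J g)
    (hJ_smul : ∀ (c : ℂ) (f : H), J (c • f) = (starRingEnd ℂ) c • J f)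
    (hJ_invol : ∀ f, J (J f) = f)
    (hJ_inner : ∀ f g : H, ⟪J f, J g⟫_ℂ = ⟪g, f⟫_ℂ)
    (U V Ubar Vbar Ut Vt : H →L[ℂ] H)
    (hUbar : ∀ f, Ubar f = J (U (J f)))
    (hVbar : ∀ f, Vbar f = J (V (J f)))
    (hUt : ∀ f, Ut f = J (adjoint U (J f)))
    (hVt : ∀ f, Vt f = J (adjoint V (J f)))
    -- the orthogonality relations
    (h1 : U ∘L adjoint U + V ∘L adjoint V = 1)
    (h2 : adjoint U ∘L U + Vt ∘L Vbar = 1)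
    (h3 : U ∘L Vt + V ∘L Ut = 0)
    (h4 : adjoint U ∘L V + Vt ∘L Ubar = 0) :
    (∀ f : H, adjoint U (U f + V (J f)) + Vt (J (U f + V (J f))) = f) ∧
    (∀ f : H, U (adjoint U f + Vt (J f)) + V (J (adjoint U f + Vt (J f))) = f) ∧
    Function.Bijective (fun f => U f + V (J f)) := by
  have key1 : ∀ f : H, adjoint U (U f + V (J f)) + Vt (J (U f + V (J f))) = f := by
    intro f
    have hJeq : J (U f + V (J f)) = Ubar (J f) + Vbar f := by
      rw [hJ_add, hUbar, hVbar, hJ_invol]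
    have e2 : adjoint U (U f) + Vt (Vbar f) = f := by
      have := ContinuousLinearMap.ext_iff.mp h2 f
      simpa using this
    have e4 : adjoint U (V (J f)) + Vt (Ubar (J f)) = 0 := by
      have := ContinuousLinearMap.ext_iff.mp h4 (J f)
      simpa using this
    rw [hJeq, map_add, map_add]
    calc adjoint U (U f) + adjoint U (V (J f)) + (Vt (Ubar (J f)) + Vt (Vbar f))
        = (adjoint U (U f) + Vt (Vbar f)) + (adjoint U (V (J f)) + Vt (Ubar (J f))) := by abel
      _ = f := by rw [e2, e4, add_zero]
  have key2 : ∀ f : H, U (adjoint U f + Vt (J f)) + V (J (adjoint U f + Vt (J f))) = f := by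
    intro f
    have hJeq : J (adjoint U f + Vt (J f)) = Ut (J f) + adjoint V f := by
      rw [hJ_add, hUt, hVt, hJ_invol, hJ_invol]
    have e1 : U (adjoint U f) + V (adjoint V f) = f := by
      have := ContinuousLinearMap.ext_iff.mp h1 f
      simpa using this
    have e3 : U (Vt (J f)) + V (Ut (J f)) = 0 := by
      have := ContinuousLinearMap.ext_iff.mp h3 (J f)
      simpa using this
    rw [hJeq, map_add, map_add]
    calc U (adjoint U f) + U (Vt (J f)) + (V (Ut (J f)) + V (adjoint V f))
        = (U (adjoint U f) + V (adjoint V f)) + (U (Vt (J f)) + V (Ut (J f))) := by abel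
      _ = f := by rw [e1, e3, add_zero]
  refine ⟨key1, key2, ?_⟩
  exact Function.bijective_iff_has_inverse.mpr
    ⟨fun f => adjoint U f + Vt (J f), fun f => key1 f, fun f => key2 f⟩
end

section
/- If the pairs (U₁,V₁) and (U₂,V₂) of bounded operators on H both satisfy the orthogonality relations U U† + V V† = I = U† U + Vᵀ V̄ and U Vᵀ + V Uᵀ = 0 = U† V + Vᵀ Ū, then the pair (U₃,V₃) := (U₂ U₁ + V₂ V̄₁, U₂ V₁ + V₂ Ū₁) also satisfies these orthogonality relations; if moreover V₁ and V₂ are Hilbert–Schmidt, then V₃ is Hilbert–Schmidt. -/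
open scoped InnerProductSpace
open ContinuousLinearMap

variable {H : Type*} [NormedAddCommGroup H] [InnerProductSpace ℂ H] [CompleteSpace H]

/-- `Abar` is the conjugate operator `Ā` of `A`: `Ā f = (A f*)*`. -/
def IsConjOf (J : H → H) (A Abar : H →L[ℂ] H) : Prop :=
  ∀ f, Abar f = J (A (J f))

/-- `At` is the transposed operator `Aᵀ` of `A`: `Aᵀ f = (A† f*)*`. -/
def IsTransposeOf (J : H → H) (A At : H →L[ℂ] H) : Prop :=
  ∀ f, At f = J (adjoint A (J f))

/-- The orthogonality relations `U U† + V V† = I = U† U + Vᵀ V̄` and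
`U Vᵀ + V Uᵀ = 0 = U† V + Vᵀ Ū`. -/
def OrthRel (U V Ubar Vbar Ut Vt : H →L[ℂ] H) : Prop :=
  U ∘L adjoint U + V ∘L adjoint V = 1 ∧
  adjoint U ∘L U + Vt ∘L Vbar = 1 ∧
  U ∘L Vt + V ∘L Ut = 0 ∧
  adjoint U ∘L V + Vt ∘L Ubar = 0

/-- `V` is a Hilbert–Schmidt operator: `∑ᵢ ‖V eᵢ‖² < ∞` for some Hilbert basis `(eᵢ)`. -/
def IsHilbertSchmidt (V : H →L[ℂ] H) : Prop :=
  ∃ (ι : Type) (e : HilbertBasis ι ℂ H), Summable fun i => ‖V (e i)‖ ^ 2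

section Aux

variable {J : H → H}

lemma conj_unique {A X Y : H →L[ℂ] H} (hX : IsConjOf J A X) (hY : IsConjOf J A Y) : X = Y := by
  ext f; rw [hX f, hY f]

lemma bar_eq {A B X Y : H →L[ℂ] H} (hX : IsConjOf J A X) (hY : IsConjOf J B Y) (h : A = B) :
    X = Y := by
  subst h; exact conj_unique hX hY

lemma conj_comp (hJ_invol : ∀ f, J (J f) = f) {A Ab B Bb : H →L[ℂ] H}
    (hA : IsConjOf J A Ab) (hB : IsConjOf J B Bb) : IsConjOf J (A ∘L B) (Ab ∘L Bb) := by
  intro f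
  show Ab (Bb f) = J (A (B (J f)))
  rw [hB f, hA, hJ_invol]

lemma conj_add (hJ_add : ∀ f g, J (f + g) = J f + J g) {A Ab B Bb : H →L[ℂ] H}
    (hA : IsConjOf J A Ab) (hB : IsConjOf J B Bb) : IsConjOf J (A + B) (Ab + Bb) := by
  intro f
  show Ab f + Bb f = J ((A (J f)) + (B (J f)))
  rw [hJ_add, hA f, hB f]

lemma conj_one (hJ_invol : ∀ f, J (J f) = f) : IsConjOf J (1 : H →L[ℂ] H) 1 := by
  intro f
  simp [hJ_invol]

lemma conj_zero (hJ_smul : ∀ (c : ℂ) (f : H), J (c • f) = (starRingEnd ℂ) c • J f) :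
    IsConjOf J (0 : H →L[ℂ] H) 0 := by
  intro f
  have := hJ_smul 0 0
  simp only [zero_smul, map_zero] at this
  simp [this]

lemma conj_symm (hJ_invol : ∀ f, J (J f) = f) {A Ab : H →L[ℂ] H} (hA : IsConjOf J A Ab) :
    IsConjOf J Ab A := by
  intro f
  rw [hA (J f), hJ_invol, hJ_invol]

lemma adjoint_conj (hJ_invol : ∀ f, J (J f) = f)
    (hJ_inner : ∀ f g : H, ⟪J f, J g⟫_ℂ = ⟪g, f⟫_ℂ)
    {A Ab At : H →L[ℂ] H} (hb : IsConjOf J A Ab) (ht : IsTransposeOf J A At) :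
    adjoint Ab = At := by
  ext f
  apply ext_inner_right ℂ
  intro g
  rw [adjoint_inner_left, hb g, ht f]
  calc ⟪f, J (A (J g))⟫_ℂ = ⟪J (J f), J (A (J g))⟫_ℂ := by rw [hJ_invol]
    _ = ⟪A (J g), J f⟫_ℂ := hJ_inner _ _
    _ = ⟪J g, adjoint A (J f)⟫_ℂ := (adjoint_inner_right A _ _).symm
    _ = ⟪J g, J (J (adjoint A (J f)))⟫_ℂ := by rw [hJ_invol]
    _ = ⟪J (adjoint A (J f)), g⟫_ℂ := hJ_inner _ _

end Aux

section RingLemmas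

variable {R : Type*} [Ring R]

lemma ring1 (u1 v1 u1d v1d u1b v1b u1t v1t u2 v2 u2d v2d : R)
    (A1 : u1 * u1d + v1 * v1d = 1) (C1 : u1 * v1t + v1 * u1t = 0)
    (C1b : u1b * v1d + v1b * u1d = 0) (A1b : u1b * u1t + v1b * v1t = 1)
    (A2 : u2 * u2d + v2 * v2d = 1) :
    (u2 * u1 + v2 * v1b) * (u1d * u2d + v1t * v2d) +
      (u2 * v1 + v2 * u1b) * (v1d * u2d + u1t * v2d) = 1 := by
  calc (u2 * u1 + v2 * v1b) * (u1d * u2d + v1t * v2d) +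
      (u2 * v1 + v2 * u1b) * (v1d * u2d + u1t * v2d)
      = u2 * (u1 * u1d + v1 * v1d) * u2d + u2 * (u1 * v1t + v1 * u1t) * v2d +
        v2 * (u1b * v1d + v1b * u1d) * u2d + v2 * (u1b * u1t + v1b * v1t) * v2d := by
        noncomm_ring
    _ = u2 * 1 * u2d + u2 * 0 * v2d + v2 * 0 * u2d + v2 * 1 * v2d := by
        rw [A1, C1, C1b, A1b]
    _ = u2 * u2d + v2 * v2d := by noncomm_ring
    _ = 1 := A2

lemma ring2 (u1 v1b u1d v1t u2 v2 u2d v2d u2b v2b u2t v2t : R)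
    (B1 : u1d * u1 + v1t * v1b = 1)
    (B2 : u2d * u2 + v2t * v2b = 1) (D2 : u2d * v2 + v2t * u2b = 0)
    (D2b : u2t * v2b + v2d * u2 = 0) (B2b : u2t * u2b + v2d * v2 = 1) :
    (u1d * u2d + v1t * v2d) * (u2 * u1 + v2 * v1b) +
      (v1t * u2t + u1d * v2t) * (u2b * v1b + v2b * u1) = 1 := by
  calc (u1d * u2d + v1t * v2d) * (u2 * u1 + v2 * v1b) +
      (v1t * u2t + u1d * v2t) * (u2b * v1b + v2b * u1)
      = u1d * (u2d * u2 + v2t * v2b) * u1 + u1d * (u2d * v2 + v2t * u2b) * v1b +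
        v1t * (u2t * v2b + v2d * u2) * u1 + v1t * (u2t * u2b + v2d * v2) * v1b := by
        noncomm_ring
    _ = u1d * 1 * u1 + u1d * 0 * v1b + v1t * 0 * u1 + v1t * 1 * v1b := by
        rw [B2, D2, D2b, B2b]
    _ = u1d * u1 + v1t * v1b := by noncomm_ring
    _ = 1 := B1

lemma ring3 (u1 v1 u1d v1d u1b v1b u1t v1t u2 v2 u2t v2t : R)
    (C1 : u1 * v1t + v1 * u1t = 0) (A1 : u1 * u1d + v1 * v1d = 1)
    (A1b : u1b * u1t + v1b * v1t = 1) (C1b : u1b * v1d + v1b * u1d = 0)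
    (C2 : u2 * v2t + v2 * u2t = 0) :
    (u2 * u1 + v2 * v1b) * (v1t * u2t + u1d * v2t) +
      (u2 * v1 + v2 * u1b) * (u1t * u2t + v1d * v2t) = 0 := by
  calc (u2 * u1 + v2 * v1b) * (v1t * u2t + u1d * v2t) +
      (u2 * v1 + v2 * u1b) * (u1t * u2t + v1d * v2t)
      = u2 * (u1 * v1t + v1 * u1t) * u2t + u2 * (u1 * u1d + v1 * v1d) * v2t +
        v2 * (u1b * u1t + v1b * v1t) * u2t + v2 * (u1b * v1d + v1b * u1d) * v2t := by
        noncomm_ring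
    _ = u2 * 0 * u2t + u2 * 1 * v2t + v2 * 1 * u2t + v2 * 0 * v2t := by
        rw [C1, A1, A1b, C1b]
    _ = u2 * v2t + v2 * u2t := by noncomm_ring
    _ = 0 := C2

lemma ring4 (v1 u1b u1d v1t u2 v2 u2d v2d u2b v2b u2t v2t : R)
    (D1 : u1d * v1 + v1t * u1b = 0)
    (B2 : u2d * u2 + v2t * v2b = 1) (D2 : u2d * v2 + v2t * u2b = 0)
    (D2b : u2t * v2b + v2d * u2 = 0) (B2b : u2t * u2b + v2d * v2 = 1) :
    (u1d * u2d + v1t * v2d) * (u2 * v1 + v2 * u1b) +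
      (v1t * u2t + u1d * v2t) * (u2b * u1b + v2b * v1) = 0 := by
  calc (u1d * u2d + v1t * v2d) * (u2 * v1 + v2 * u1b) +
      (v1t * u2t + u1d * v2t) * (u2b * u1b + v2b * v1)
      = u1d * (u2d * u2 + v2t * v2b) * v1 + u1d * (u2d * v2 + v2t * u2b) * u1b +
        v1t * (u2t * v2b + v2d * u2) * v1 + v1t * (u2t * u2b + v2d * v2) * u1b := by
        noncomm_ring
    _ = u1d * 1 * v1 + u1d * 0 * u1b + v1t * 0 * v1 + v1t * 1 * u1b := by
        rw [B2, D2, D2b, B2b]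
    _ = u1d * v1 + v1t * u1b := by noncomm_ring
    _ = 0 := D1

end RingLemmas

section HS

lemma parseval_hasSum {κ : Type*} (b : HilbertBasis κ ℂ H) (x : H) :
    HasSum (fun j => ‖⟪b j, x⟫_ℂ‖ ^ 2) (‖x‖ ^ 2) := by
  have h0 := (b.hasSum_inner_mul_inner x x).mapL Complex.reCLM
  have hfun : (fun j => ‖⟪b j, x⟫_ℂ‖ ^ 2) =
      fun j => Complex.reCLM (⟪x, b j⟫_ℂ * ⟪b j, x⟫_ℂ) := by
    funext j
    rw [← inner_conj_symm x (b j), RCLike.conj_mul]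
    simp [← Complex.ofReal_pow]
  have h2 : ‖x‖ ^ 2 = Complex.reCLM ⟪x, x⟫_ℂ := by
    simpa using (inner_self_eq_norm_sq (𝕜 := ℂ) x).symm
  rw [hfun, h2]
  exact h0

lemma hs_adj (X : H →L[ℂ] H) {ι κ : Type*} (e : HilbertBasis ι ℂ H) (f : HilbertBasis κ ℂ H)
    (h : Summable fun i => ‖X (e i)‖ ^ 2) :
    Summable fun j => ‖adjoint X (f j)‖ ^ 2 := by
  have hsum : Summable fun p : ι × κ => ‖⟪f p.2, X (e p.1)⟫_ℂ‖ ^ 2 := by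
    rw [summable_prod_of_nonneg (fun p => sq_nonneg _)]
    refine ⟨fun i => (parseval_hasSum f (X (e i))).summable, ?_⟩
    have : (fun i => ∑' j, ‖⟪f j, X (e i)⟫_ℂ‖ ^ 2) = fun i => ‖X (e i)‖ ^ 2 :=
      funext fun i => (parseval_hasSum f (X (e i))).tsum_eq
    rw [this]; exact h
  have hswap : Summable fun q : κ × ι => ‖⟪e q.2, adjoint X (f q.1)⟫_ℂ‖ ^ 2 := by
    have h2 := hsum.prod_symm
    have : (fun q : κ × ι => ‖⟪f q.swap.2, X (e q.swap.1)⟫_ℂ‖ ^ 2) =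
        fun q : κ × ι => ‖⟪e q.2, adjoint X (f q.1)⟫_ℂ‖ ^ 2 := by
      funext q
      rw [adjoint_inner_right, norm_inner_symm]
      rfl
    rwa [this] at h2
  have := ((summable_prod_of_nonneg (fun q => sq_nonneg _)).mp hswap).2
  have heq : (fun j => ∑' i, ‖⟪e i, adjoint X (f j)⟫_ℂ‖ ^ 2) =
      fun j => ‖adjoint X (f j)‖ ^ 2 :=
    funext fun j => (parseval_hasSum e (adjoint X (f j))).tsum_eq
  rwa [heq] at this

lemma hs_comp_left (U X : H →L[ℂ] H) {ι : Type*} (e : HilbertBasis ι ℂ H)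
    (h : Summable fun i => ‖X (e i)‖ ^ 2) :
    Summable fun i => ‖(U ∘L X) (e i)‖ ^ 2 := by
  refine Summable.of_nonneg_of_le (fun i => sq_nonneg _) (fun i => ?_) (h.mul_left (‖U‖ ^ 2))
  have h1 : ‖U (X (e i))‖ ≤ ‖U‖ * ‖X (e i)‖ := U.le_opNorm _
  have h2 : (0:ℝ) ≤ ‖U (X (e i))‖ := norm_nonneg _
  calc ‖(U ∘L X) (e i)‖ ^ 2 ≤ (‖U‖ * ‖X (e i)‖) ^ 2 := by
        simpa [ContinuousLinearMap.comp_apply] using pow_le_pow_left₀ h2 h1 2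
    _ = ‖U‖ ^ 2 * ‖X (e i)‖ ^ 2 := by ring

end HS

set_option maxHeartbeats 1600000 in
/-- The pairs satisfying the orthogonality relations are closed under the
composition law `(U₃,V₃) = (U₂ U₁ + V₂ V̄₁, U₂ V₁ + V₂ Ū₁)`; moreover if `V₁` and `V₂` are
Hilbert–Schmidt then so is `V₃`. -/
theorem orthRel_comp
    [TopologicalSpace.SeparableSpace H]
    -- the antiunitary involution `f ↦ f* = J f`
    (J : H → H)
    (hJ_add : ∀ f g, J (f + g) = J f + J g)
    (hJ_smul : ∀ (c : ℂ) (f : H), J (c • f) = (starRingEnd ℂ) c • J f)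
    (hJ_invol : ∀ f, J (J f) = f)
    (hJ_inner : ∀ f g : H, ⟪J f, J g⟫_ℂ = ⟪g, f⟫_ℂ)
    (U₁ V₁ U₁bar V₁bar U₁t V₁t : H →L[ℂ] H)
    (U₂ V₂ U₂bar V₂bar U₂t V₂t : H →L[ℂ] H)
    (hU₁bar : IsConjOf J U₁ U₁bar) (hV₁bar : IsConjOf J V₁ V₁bar)
    (hU₁t : IsTransposeOf J U₁ U₁t) (hV₁t : IsTransposeOf J V₁ V₁t)
    (hU₂bar : IsConjOf J U₂ U₂bar) (hV₂bar : IsConjOf J V₂ V₂bar)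
    (hU₂t : IsTransposeOf J U₂ U₂t) (hV₂t : IsTransposeOf J V₂ V₂t)
    (h₁ : OrthRel U₁ V₁ U₁bar V₁bar U₁t V₁t)
    (h₂ : OrthRel U₂ V₂ U₂bar V₂bar U₂t V₂t)
    -- conjugates and transposes of `U₃ = U₂ U₁ + V₂ V̄₁` and `V₃ = U₂ V₁ + V₂ Ū₁`
    (U₃bar V₃bar U₃t V₃t : H →L[ℂ] H)
    (hU₃bar : IsConjOf J (U₂ ∘L U₁ + V₂ ∘L V₁bar) U₃bar)
    (hV₃bar : IsConjOf J (U₂ ∘L V₁ + V₂ ∘L U₁bar) V₃bar)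
    (hU₃t : IsTransposeOf J (U₂ ∘L U₁ + V₂ ∘L V₁bar) U₃t)
    (hV₃t : IsTransposeOf J (U₂ ∘L V₁ + V₂ ∘L U₁bar) V₃t) :
    OrthRel (U₂ ∘L U₁ + V₂ ∘L V₁bar) (U₂ ∘L V₁ + V₂ ∘L U₁bar) U₃bar V₃bar U₃t V₃t ∧
    (IsHilbertSchmidt V₁ → IsHilbertSchmidt V₂ →
      IsHilbertSchmidt (U₂ ∘L V₁ + V₂ ∘L U₁bar)) := by
  obtain ⟨hA1, hB1, hC1, hD1⟩ := h₁
  obtain ⟨hA2, hB2, hC2, hD2⟩ := h₂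
  -- view transposes as conjugates of adjoints
  have htU₁ : IsConjOf J (adjoint U₁) U₁t := hU₁t
  have htV₁ : IsConjOf J (adjoint V₁) V₁t := hV₁t
  have htU₂ : IsConjOf J (adjoint U₂) U₂t := hU₂t
  have htV₂ : IsConjOf J (adjoint V₂) V₂t := hV₂t
  -- adjoints of bars are transposes
  have haU₁ : adjoint U₁bar = U₁t := adjoint_conj hJ_invol hJ_inner hU₁bar hU₁t
  have haV₁ : adjoint V₁bar = V₁t := adjoint_conj hJ_invol hJ_inner hV₁bar hV₁t
  have haU₂ : adjoint U₂bar = U₂t := adjoint_conj hJ_invol hJ_inner hU₂bar hU₂t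
  have haV₂ : adjoint V₂bar = V₂t := adjoint_conj hJ_invol hJ_inner hV₂bar hV₂t
  have haU₁t : adjoint U₁t = U₁bar := by rw [← haU₁, adjoint_adjoint]
  -- barred relations
  have hC1b : U₁bar ∘L adjoint V₁ + V₁bar ∘L adjoint U₁ = 0 :=
    bar_eq (conj_add hJ_add (conj_comp hJ_invol hU₁bar (conj_symm hJ_invol htV₁))
      (conj_comp hJ_invol hV₁bar (conj_symm hJ_invol htU₁))) (conj_zero hJ_smul) hC1
  have hA1b : U₁bar ∘L U₁t + V₁bar ∘L V₁t = 1 :=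
    bar_eq (conj_add hJ_add (conj_comp hJ_invol hU₁bar htU₁)
      (conj_comp hJ_invol hV₁bar htV₁)) (conj_one hJ_invol) hA1
  have hD2b : U₂t ∘L V₂bar + adjoint V₂ ∘L U₂ = 0 :=
    bar_eq (conj_add hJ_add (conj_comp hJ_invol htU₂ hV₂bar)
      (conj_comp hJ_invol (conj_symm hJ_invol htV₂) (conj_symm hJ_invol hU₂bar)))
      (conj_zero hJ_smul) hD2
  have hB2b : U₂t ∘L U₂bar + adjoint V₂ ∘L V₂ = 1 :=
    bar_eq (conj_add hJ_add (conj_comp hJ_invol htU₂ hU₂bar)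
      (conj_comp hJ_invol (conj_symm hJ_invol htV₂) (conj_symm hJ_invol hV₂bar)))
      (conj_one hJ_invol) hB2
  -- identify the bar/transpose of the composed operators
  have hU₃bar_eq : U₃bar = U₂bar ∘L U₁bar + V₂bar ∘L V₁ :=
    conj_unique hU₃bar (conj_add hJ_add (conj_comp hJ_invol hU₂bar hU₁bar)
      (conj_comp hJ_invol hV₂bar (conj_symm hJ_invol hV₁bar)))
  have hV₃bar_eq : V₃bar = U₂bar ∘L V₁bar + V₂bar ∘L U₁ :=
    conj_unique hV₃bar (conj_add hJ_add (conj_comp hJ_invol hU₂bar hV₁bar)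
      (conj_comp hJ_invol hV₂bar (conj_symm hJ_invol hU₁bar)))
  have hU₃t_eq : U₃t = U₁t ∘L U₂t + adjoint V₁ ∘L V₂t := by
    rw [← adjoint_conj hJ_invol hJ_inner hU₃bar hU₃t, hU₃bar_eq, map_add, adjoint_comp,
      adjoint_comp, haU₁, haU₂, haV₂]
  have hV₃t_eq : V₃t = V₁t ∘L U₂t + adjoint U₁ ∘L V₂t := by
    rw [← adjoint_conj hJ_invol hJ_inner hV₃bar hV₃t, hV₃bar_eq, map_add, adjoint_comp,
      adjoint_comp, haV₁, haU₂, haV₂]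
  have hU₃d : adjoint (U₂ ∘L U₁ + V₂ ∘L V₁bar) =
      adjoint U₁ ∘L adjoint U₂ + V₁t ∘L adjoint V₂ := by
    rw [map_add, adjoint_comp, adjoint_comp, haV₁]
  simp only [← ContinuousLinearMap.mul_def] at hA1 hB1 hC1 hD1 hA2 hB2 hC2 hD2 hC1b hA1b hD2b hB2b
  constructor
  · refine ⟨?_, ?_, ?_, ?_⟩
    · rw [hU₃d]
      have hV₃d : adjoint (U₂ ∘L V₁ + V₂ ∘L U₁bar) =
          adjoint V₁ ∘L adjoint U₂ + U₁t ∘L adjoint V₂ := by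
        rw [map_add, adjoint_comp, adjoint_comp, haU₁]
      rw [hV₃d]
      simp only [← ContinuousLinearMap.mul_def]
      exact ring1 U₁ V₁ (adjoint U₁) (adjoint V₁) U₁bar V₁bar U₁t V₁t U₂ V₂ (adjoint U₂)
        (adjoint V₂) hA1 hC1 hC1b hA1b hA2
    · rw [hU₃d, hV₃t_eq, hV₃bar_eq]
      simp only [← ContinuousLinearMap.mul_def]
      exact ring2 U₁ V₁bar (adjoint U₁) V₁t U₂ V₂ (adjoint U₂) (adjoint V₂) U₂bar V₂bar U₂t V₂t
        hB1 hB2 hD2 hD2b hB2b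
    · rw [hV₃t_eq, hU₃t_eq]
      simp only [← ContinuousLinearMap.mul_def]
      exact ring3 U₁ V₁ (adjoint U₁) (adjoint V₁) U₁bar V₁bar U₁t V₁t U₂ V₂ U₂t V₂t
        hC1 hA1 hA1b hC1b hC2
    · rw [hU₃d, hV₃t_eq, hU₃bar_eq]
      simp only [← ContinuousLinearMap.mul_def]
      exact ring4 V₁ U₁bar (adjoint U₁) V₁t U₂ V₂ (adjoint U₂) (adjoint V₂) U₂bar V₂bar U₂t V₂t
        hD1 hB2 hD2 hD2b hB2b
  · rintro ⟨ι, e, h1⟩ ⟨κ, f, h2⟩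
    refine ⟨ι, e, ?_⟩
    have t1 : Summable fun i => ‖(U₂ ∘L V₁) (e i)‖ ^ 2 := hs_comp_left U₂ V₁ e h1
    have t2 : Summable fun i => ‖(V₂ ∘L U₁bar) (e i)‖ ^ 2 := by
      have hV₂adj : Summable fun i => ‖adjoint V₂ (e i)‖ ^ 2 := hs_adj V₂ f e h2
      have hc : Summable fun i => ‖(U₁t ∘L adjoint V₂) (e i)‖ ^ 2 :=
        hs_comp_left U₁t (adjoint V₂) e hV₂adj
      have ha := hs_adj (U₁t ∘L adjoint V₂) e e hc
      have : adjoint (U₁t ∘L adjoint V₂) = V₂ ∘L U₁bar := by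
        rw [adjoint_comp, adjoint_adjoint, haU₁t]
      rwa [this] at ha
    refine Summable.of_nonneg_of_le (fun i => sq_nonneg _) (fun i => ?_)
      ((t1.mul_left 2).add (t2.mul_left 2))
    have hle : ‖(U₂ ∘L V₁ + V₂ ∘L U₁bar) (e i)‖ ≤ ‖(U₂ ∘L V₁) (e i)‖ + ‖(V₂ ∘L U₁bar) (e i)‖ := by
      rw [ContinuousLinearMap.add_apply]; exact norm_add_le _ _
    nlinarith [norm_nonneg ((U₂ ∘L V₁) (e i)), norm_nonneg ((V₂ ∘L U₁bar) (e i)),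
      norm_nonneg ((U₂ ∘L V₁ + V₂ ∘L U₁bar) (e i)),
      sq_nonneg (‖(U₂ ∘L V₁) (e i)‖ - ‖(V₂ ∘L U₁bar) (e i)‖)]
end

section
/- Let V be a bounded operator on H. (i) For every nonzero complex number λ, V restricts to a linear isomorphism from ker(V†V − λ·I) onto ker(V V† − λ·I). (ii) If V is Hilbert–Schmidt and 0 < λ ≤ 1, then the eigenspaces ker(V V† − λ·I) and ker(Vᵀ V̄ − λ·I) are finite-dimensional and have equal dimension. -/
open scoped InnerProductSpace
open ContinuousLinearMap

variable {H : Type*} [NormedAddCommGroup H] [InnerProductSpace ℂ H] [CompleteSpace H]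

open scoped ENNReal

set_option linter.unusedSectionVars false

private lemma parseval_enn {ι : Type*} (b : HilbertBasis ι ℂ H) (x : H) :
    ∑' i, ENNReal.ofReal (‖⟪b i, x⟫_ℂ‖ ^ 2) = ENNReal.ofReal (‖x‖ ^ 2) := by
  have h := b.hasSum_inner_mul_inner x x
  have h2 : HasSum (fun i => ((‖⟪b i, x⟫_ℂ‖ ^ 2 : ℝ) : ℂ)) ((‖x‖ ^ 2 : ℝ) : ℂ) := by
    have hf : (fun i => ⟪x, b i⟫_ℂ * ⟪b i, x⟫_ℂ) = fun i => ((‖⟪b i, x⟫_ℂ‖ ^ 2 : ℝ) : ℂ) := by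
      funext i
      rw [← inner_conj_symm x (b i), mul_comm, Complex.mul_conj, Complex.normSq_eq_norm_sq]
    have hx : ⟪x, x⟫_ℂ = ((‖x‖ ^ 2 : ℝ) : ℂ) := by
      rw [inner_self_eq_norm_sq_to_K]; norm_cast
    rw [hf, hx] at h
    exact h
  have h3 : HasSum (fun i => (‖⟪b i, x⟫_ℂ‖ ^ 2 : ℝ)) (‖x‖ ^ 2) := Complex.hasSum_ofReal.mp h2
  rw [← ENNReal.ofReal_tsum_of_nonneg (fun i => by positivity) h3.summable, h3.tsum_eq]

private lemma bessel_enn {κ : Type*} {f : κ → H} (hf : Orthonormal ℂ f) (x : H) :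
    ∑' k, ENNReal.ofReal (‖⟪x, f k⟫_ℂ‖ ^ 2) ≤ ENNReal.ofReal (‖x‖ ^ 2) := by
  have hsum : Summable fun k => ‖⟪f k, x⟫_ℂ‖ ^ 2 := hf.inner_products_summable x
  have hle := hf.tsum_inner_products_le x
  calc ∑' k, ENNReal.ofReal (‖⟪x, f k⟫_ℂ‖ ^ 2)
      = ∑' k, ENNReal.ofReal (‖⟪f k, x⟫_ℂ‖ ^ 2) := by
        congr 1; funext k; rw [norm_inner_symm]
    _ = ENNReal.ofReal (∑' k, ‖⟪f k, x⟫_ℂ‖ ^ 2) :=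
        (ENNReal.ofReal_tsum_of_nonneg (fun k => by positivity) hsum).symm
    _ ≤ ENNReal.ofReal (‖x‖ ^ 2) := ENNReal.ofReal_le_ofReal hle

private lemma hs_bound {ι κ : Type*} (W : H →L[ℂ] H) (b : HilbertBasis ι ℂ H)
    {f : κ → H} (hf : Orthonormal ℂ f) :
    ∑' k, ENNReal.ofReal (‖W (f k)‖ ^ 2) ≤ ∑' i, ENNReal.ofReal (‖adjoint W (b i)‖ ^ 2) := by
  calc ∑' k, ENNReal.ofReal (‖W (f k)‖ ^ 2)
      = ∑' k, ∑' i, ENNReal.ofReal (‖⟪adjoint W (b i), f k⟫_ℂ‖ ^ 2) := by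
        congr 1; funext k
        rw [← parseval_enn b (W (f k))]
        congr 1; funext i; rw [adjoint_inner_left]
    _ = ∑' i, ∑' k, ENNReal.ofReal (‖⟪adjoint W (b i), f k⟫_ℂ‖ ^ 2) := ENNReal.tsum_comm
    _ ≤ ∑' i, ENNReal.ofReal (‖adjoint W (b i)‖ ^ 2) :=
        ENNReal.tsum_le_tsum fun i => bessel_enn hf _

private lemma findim_of_bound (W : H →L[ℂ] H) (C : ℝ≥0∞) (hC : C ≠ ⊤)
    (hb : ∀ f : ℕ → H, Orthonormal ℂ f →
      ∑' k, ENNReal.ofReal (‖W (f k)‖ ^ 2) ≤ C)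
    (lam : ℝ) (hlam : 0 < lam)
    (K : Submodule ℂ H) (hKc : IsClosed (K : Set H))
    (hK : ∀ x ∈ K, ‖W x‖ ^ 2 = lam * ‖x‖ ^ 2) : FiniteDimensional ℂ K := by
  classical
  haveI : CompleteSpace K := hKc.completeSpace_coe
  obtain ⟨w, bK, hbK⟩ := exists_hilbertBasis ℂ K
  have horth : Orthonormal ℂ (fun i : w => ((bK i : K) : H)) := by
    have h1 := bK.orthonormal
    rw [orthonormal_iff_ite] at h1 ⊢
    intro i j
    rw [← Submodule.coe_inner]
    exact h1 i j
  have hfin : Finite w := by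
    by_contra hinf
    rw [not_finite_iff_infinite] at hinf
    set g : ℕ → H := fun n => ((bK (Infinite.natEmbedding w n) : K) : H) with hg
    have hgorth : Orthonormal ℂ g := horth.comp _ (Infinite.natEmbedding w).injective
    have hle := hb g hgorth
    have hval : ∀ n : ℕ, ENNReal.ofReal (‖W (g n)‖ ^ 2) = ENNReal.ofReal lam := by
      intro n
      rw [hK _ (bK (Infinite.natEmbedding w n)).2]
      have h2 : ‖g n‖ = 1 := by
        rw [hg]; dsimp only
        rw [Submodule.norm_coe]
        exact bK.orthonormal.1 _
      rw [h2]; norm_num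
    rw [tsum_congr hval, ENNReal.tsum_const_eq_top_of_ne_zero (by simp [hlam, hlam.le])] at hle
    exact hC (top_le_iff.mp hle)
  have hdense := bK.dense_span
  rw [hbK] at hdense
  have hspan : FiniteDimensional ℂ (Submodule.span ℂ (Set.range ((↑) : w → K))) :=
    FiniteDimensional.span_of_finite ℂ (Set.finite_range _)
  have hclosed : IsClosed ((Submodule.span ℂ (Set.range ((↑) : w → K))) : Set K) :=
    Submodule.closed_of_finiteDimensional _
  rw [hclosed.submodule_topologicalClosure_eq] at hdense
  have : FiniteDimensional ℂ (⊤ : Submodule ℂ K) := hdense ▸ hspan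
  exact (Submodule.topEquiv.finiteDimensional)

private lemma mem_ker_iff (A B : H →L[ℂ] H) (μ : ℂ) (x : H) :
    x ∈ LinearMap.ker ((A ∘L B - μ • (1 : H →L[ℂ] H) : H →L[ℂ] H) : H →ₗ[ℂ] H) ↔ A (B x) = μ • x := by
  rw [LinearMap.mem_ker, ContinuousLinearMap.coe_coe]
  have h : (A ∘L B - μ • (1 : H →L[ℂ] H)) x = A (B x) - μ • x := by
    simp [ContinuousLinearMap.sub_apply]
  rw [h, sub_eq_zero]

set_option maxHeartbeats 1000000 in
/-- (i) For `μ ≠ 0`, `V` restricts to a (linear) bijection from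
`ker (V†V − μ)` onto `ker (VV† − μ)`.  (ii) If `V` is Hilbert–Schmidt and `0 < λ ≤ 1`,
the eigenspaces `ker (VV† − λ)` and `ker (VᵀV̄ − λ)` are finite-dimensional of the same
dimension. -/
theorem eigenspace_dims
    [TopologicalSpace.SeparableSpace H]
    -- the antiunitary involution `f ↦ f* = J f`
    (J : H → H)
    (hJ_add : ∀ f g, J (f + g) = J f + J g)
    (hJ_smul : ∀ (c : ℂ) (f : H), J (c • f) = (starRingEnd ℂ) c • J f)
    (hJ_invol : ∀ f, J (J f) = f)
    (hJ_inner : ∀ f g : H, ⟪J f, J g⟫_ℂ = ⟪g, f⟫_ℂ)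
    (V Vbar Vt : H →L[ℂ] H)
    (hVbar : ∀ f, Vbar f = J (V (J f)))
    (hVt : ∀ f, Vt f = J (adjoint V (J f))) :
    (∀ μ : ℂ, μ ≠ 0 →
      Set.BijOn V (LinearMap.ker ((adjoint V ∘L V - μ • (1 : H →L[ℂ] H) : H →L[ℂ] H) : H →ₗ[ℂ] H) : Set H)
        (LinearMap.ker ((V ∘L adjoint V - μ • (1 : H →L[ℂ] H) : H →L[ℂ] H) : H →ₗ[ℂ] H) : Set H)) ∧
    (IsHilbertSchmidt V → ∀ lam : ℝ, 0 < lam → lam ≤ 1 →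
      FiniteDimensional ℂ (LinearMap.ker ((V ∘L adjoint V - (lam : ℂ) • (1 : H →L[ℂ] H) : H →L[ℂ] H) : H →ₗ[ℂ] H)) ∧
      FiniteDimensional ℂ (LinearMap.ker ((Vt ∘L Vbar - (lam : ℂ) • (1 : H →L[ℂ] H) : H →L[ℂ] H) : H →ₗ[ℂ] H)) ∧
      Module.finrank ℂ (LinearMap.ker ((V ∘L adjoint V - (lam : ℂ) • (1 : H →L[ℂ] H) : H →L[ℂ] H) : H →ₗ[ℂ] H)) =
        Module.finrank ℂ (LinearMap.ker ((Vt ∘L Vbar - (lam : ℂ) • (1 : H →L[ℂ] H) : H →L[ℂ] H) : H →ₗ[ℂ] H))) := by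
  have part1 : ∀ μ : ℂ, μ ≠ 0 →
      Set.BijOn V (LinearMap.ker ((adjoint V ∘L V - μ • (1 : H →L[ℂ] H) : H →L[ℂ] H) : H →ₗ[ℂ] H) : Set H)
        (LinearMap.ker ((V ∘L adjoint V - μ • (1 : H →L[ℂ] H) : H →L[ℂ] H) : H →ₗ[ℂ] H) : Set H) := by
    intro μ hμ
    refine ⟨?_, ?_, ?_⟩
    · intro x hx
      rw [SetLike.mem_coe, mem_ker_iff] at hx ⊢
      rw [hx, map_smul]
    · intro x hx y hy hxy
      rw [SetLike.mem_coe, mem_ker_iff] at hx hy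
      have h1 := congrArg (adjoint V) hxy
      rw [hx, hy] at h1
      exact smul_right_injective H hμ h1
    · intro y hy
      rw [SetLike.mem_coe, mem_ker_iff] at hy
      refine ⟨μ⁻¹ • (adjoint V y), ?_, ?_⟩
      · rw [SetLike.mem_coe, mem_ker_iff, map_smul, map_smul, hy, map_smul,
          smul_smul, smul_smul, mul_comm]
      · rw [map_smul, hy, smul_smul, inv_mul_cancel₀ hμ, one_smul]
  refine ⟨part1, ?_⟩
  rintro ⟨ι, e, hsum⟩ lam hlam0 hlam1
  set μ : ℂ := (lam : ℂ) with hμdef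
  have hμ : μ ≠ 0 := by
    simpa [hμdef] using Complex.ofReal_ne_zero.mpr hlam0.ne'
  set K1 : Submodule ℂ H := LinearMap.ker ((V ∘L adjoint V - μ • (1 : H →L[ℂ] H) : H →L[ℂ] H) : H →ₗ[ℂ] H) with hK1
  set K0 : Submodule ℂ H := LinearMap.ker ((adjoint V ∘L V - μ • (1 : H →L[ℂ] H) : H →L[ℂ] H) : H →ₗ[ℂ] H) with hK0
  set K2 : Submodule ℂ H := LinearMap.ker ((Vt ∘L Vbar - μ • (1 : H →L[ℂ] H) : H →L[ℂ] H) : H →ₗ[ℂ] H) with hK2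
  -- C, the HS bound
  set C : ℝ≥0∞ := ∑' i, ENNReal.ofReal (‖V (e i)‖ ^ 2) with hCdef
  have hC : C ≠ ⊤ := by
    rw [hCdef, ← ENNReal.ofReal_tsum_of_nonneg (fun i => by positivity) hsum]
    exact ENNReal.ofReal_ne_top
  -- K1 is finite dimensional
  haveI hfin1 : FiniteDimensional ℂ K1 := by
    refine findim_of_bound (adjoint V) C hC ?_ lam hlam0 K1 ?_ ?_
    · intro f hf
      calc ∑' k, ENNReal.ofReal (‖adjoint V (f k)‖ ^ 2)
          ≤ ∑' i, ENNReal.ofReal (‖adjoint (adjoint V) (e i)‖ ^ 2) := hs_bound _ e hf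
        _ = C := by rw [hCdef]; congr 1; funext i; rw [adjoint_adjoint]
    · exact ContinuousLinearMap.isClosed_ker _
    · intro x hx
      rw [hK1, mem_ker_iff] at hx
      have h2 : ⟪adjoint V x, adjoint V x⟫_ℂ = (lam : ℂ) * ⟪x, x⟫_ℂ := by
        rw [adjoint_inner_right, hx, inner_smul_left]
        simp [hμdef, Complex.conj_ofReal]
      rw [← inner_self_eq_norm_sq (𝕜 := ℂ) x, ← inner_self_eq_norm_sq (𝕜 := ℂ) (adjoint V x),
        h2]
      simp [RCLike.re_ofReal_mul]
  -- the linear equivalence K0 ≃ K1 coming from part (i)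
  have hbij := part1 μ hμ
  let L : K0 →ₗ[ℂ] K1 :=
    ((V : H →ₗ[ℂ] H).domRestrict K0).codRestrict K1 (fun x => hbij.mapsTo x.2)
  have hLbij : Function.Bijective L := by
    constructor
    · intro x y hxy
      have : V (x : H) = V (y : H) := congrArg Subtype.val hxy
      exact Subtype.ext (hbij.injOn x.2 y.2 this)
    · intro y
      obtain ⟨x, hx, hvx⟩ := hbij.surjOn y.2
      exact ⟨⟨x, hx⟩, Subtype.ext hvx⟩
  let e01 : K0 ≃ₗ[ℂ] K1 := LinearEquiv.ofBijective L hLbij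
  haveI hfin0 : FiniteDimensional ℂ K0 := Module.Finite.equiv e01.symm
  -- J gives a real-linear equivalence K2 ≃ K0
  have hJinj : Function.Injective J := by
    intro a b hab
    have := congrArg J hab
    rwa [hJ_invol, hJ_invol] at this
  have hmem2 : ∀ x : H, x ∈ K2 ↔ adjoint V (V (J x)) = μ • (J x) := by
    intro x
    rw [hK2, mem_ker_iff]
    have hVtVb : Vt (Vbar x) = J (adjoint V (V (J x))) := by
      rw [hVbar, hVt, hJ_invol]
    rw [hVtVb]
    constructor
    · intro h
      have := congrArg J h
      rw [hJ_invol, hJ_smul] at this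
      rw [this]
      congr 1
      simp [hμdef, Complex.conj_ofReal]
    · intro h
      rw [h, hJ_smul, hJ_invol]
      congr 1
      simp [hμdef, Complex.conj_ofReal]
  have hmem0 : ∀ x : H, x ∈ K0 ↔ adjoint V (V x) = μ • x := fun x => by
    rw [hK0, mem_ker_iff]
  have hJ20 : ∀ x : H, x ∈ K2 → J x ∈ K0 := by
    intro x hx
    rw [hmem0]
    exact (hmem2 x).mp hx
  have hJ02 : ∀ x : H, x ∈ K0 → J x ∈ K2 := by
    intro x hx
    rw [hmem2, hJ_invol]
    exact (hmem0 x).mp hx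
  have hJsmulR : ∀ (r : ℝ) (f : H), J (r • f) = r • J f := by
    intro r f
    rw [← Complex.coe_smul, hJ_smul, Complex.conj_ofReal, Complex.coe_smul]
  let eJ : K2 ≃ₗ[ℝ] K0 :=
    { toFun := fun x => ⟨J x, hJ20 x x.2⟩
      invFun := fun y => ⟨J y, hJ02 y y.2⟩
      map_add' := fun x y => Subtype.ext (hJ_add x y)
      map_smul' := fun r x => Subtype.ext (hJsmulR r x)
      left_inv := fun x => Subtype.ext (hJ_invol x)
      right_inv := fun y => Subtype.ext (hJ_invol y) }
  haveI : FiniteDimensional ℝ K0 := FiniteDimensional.trans ℝ ℂ K0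
  haveI hfin2R : FiniteDimensional ℝ K2 := Module.Finite.equiv eJ.symm
  haveI hfin2 : FiniteDimensional ℂ K2 :=
    Module.Finite.of_restrictScalars_finite ℝ ℂ K2
  refine ⟨hfin1, hfin2, ?_⟩
  have hr01 : Module.finrank ℂ K0 = Module.finrank ℂ K1 := e01.finrank_eq
  have hr20 : Module.finrank ℝ K2 = Module.finrank ℝ K0 := eJ.finrank_eq
  have h2 : ∀ (K : Submodule ℂ H),
      Module.finrank ℝ K = 2 * Module.finrank ℂ K := by
    intro K
    rw [← Module.finrank_mul_finrank ℝ ℂ K, Complex.finrank_real_complex]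
  rw [h2 K2, h2 K0] at hr20
  omega
end

section
/- If bounded operators U, V on H satisfy U U† + V V† = I = U† U + Vᵀ V̄ and V is Hilbert–Schmidt, then the kernels ker U and ker U† are finite-dimensional and have the same dimension: dim(ker U) = dim(ker U†) < ∞. -/
open scoped InnerProductSpace ENNReal NNReal
set_option linter.unusedSectionVars false
set_option linter.unusedVariables false
open ContinuousLinearMap

variable {H : Type*} [NormedAddCommGroup H] [InnerProductSpace ℂ H] [CompleteSpace H]

-- Parseval, NNReal form
lemma parseval_nnreal {ι : Type*} (e : HilbertBasis ι ℂ H) (x : H) :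
    HasSum (fun i => ‖⟪e i, x⟫_ℂ‖₊ ^ 2) (‖x‖₊ ^ 2) := by
  rw [← NNReal.hasSum_coe]
  have h := (e.hasSum_inner_mul_inner x x).mapL Complex.reCLM
  have hterm : ∀ i, Complex.reCLM (⟪x, e i⟫_ℂ * ⟪e i, x⟫_ℂ) = ((‖⟪e i, x⟫_ℂ‖₊ : ℝ) ^ 2) := by
    intro i
    rw [← inner_conj_symm x (e i), RCLike.conj_mul]
    norm_cast
  have hx : Complex.reCLM ⟪x, x⟫_ℂ = ((‖x‖₊ : ℝ) ^ 2) := by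
    simpa using inner_self_eq_norm_sq (𝕜 := ℂ) x
  simpa [hterm, hx, ← Complex.ofReal_pow] using h

-- Bessel, ENNReal form
lemma bessel_ennreal {κ : Type*} {g : κ → H} (hg : Orthonormal ℂ g) (x : H) :
    ∑' k, (‖⟪g k, x⟫_ℂ‖₊ : ℝ≥0∞) ^ 2 ≤ (‖x‖₊ : ℝ≥0∞) ^ 2 := by
  rw [ENNReal.tsum_eq_iSup_sum]
  refine iSup_le fun s => ?_
  have h := hg.sum_inner_products_le (s := s) x
  have h2 : ((∑ i ∈ s, ‖⟪g i, x⟫_ℂ‖₊ ^ 2 : ℝ≥0) : ℝ≥0∞) ≤ ((‖x‖₊ ^ 2 : ℝ≥0) : ℝ≥0∞) := by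
    rw [ENNReal.coe_le_coe, ← NNReal.coe_le_coe]
    push_cast
    simpa using h
  simpa using h2

-- parseval ENNReal form
lemma parseval_ennreal {ι : Type*} (e : HilbertBasis ι ℂ H) (x : H) :
    (‖x‖₊ : ℝ≥0∞) ^ 2 = ∑' i, (‖⟪e i, x⟫_ℂ‖₊ : ℝ≥0∞) ^ 2 := by
  have h := parseval_nnreal e x
  rw [← ENNReal.coe_pow, ← h.tsum_eq, ENNReal.coe_tsum h.summable]
  push_cast
  rfl

-- main HS bound: for any orthonormal family g, ∑ₖ ‖W† gₖ‖² ≤ ∑ᵢ ‖W eᵢ‖²  (in ℝ≥0∞)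
lemma hs_adjoint_bound {ι κ : Type*} (e : HilbertBasis ι ℂ H) (W : H →L[ℂ] H)
    {g : κ → H} (hg : Orthonormal ℂ g) :
    ∑' k, (‖adjoint W (g k)‖₊ : ℝ≥0∞) ^ 2 ≤ ∑' i, (‖W (e i)‖₊ : ℝ≥0∞) ^ 2 := by
  calc ∑' k, (‖adjoint W (g k)‖₊ : ℝ≥0∞) ^ 2
      = ∑' k, ∑' i, (‖⟪W (e i), g k⟫_ℂ‖₊ : ℝ≥0∞) ^ 2 := by
        refine tsum_congr fun k => ?_
        rw [parseval_ennreal e (adjoint W (g k))]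
        refine tsum_congr fun i => by rw [adjoint_inner_right]
    _ = ∑' i, ∑' k, (‖⟪W (e i), g k⟫_ℂ‖₊ : ℝ≥0∞) ^ 2 := ENNReal.tsum_comm
    _ ≤ ∑' i, (‖W (e i)‖₊ : ℝ≥0∞) ^ 2 := by
        refine ENNReal.tsum_le_tsum fun i => ?_
        calc ∑' k, (‖⟪W (e i), g k⟫_ℂ‖₊ : ℝ≥0∞) ^ 2
            = ∑' k, (‖⟪g k, W (e i)⟫_ℂ‖₊ : ℝ≥0∞) ^ 2 := by
              refine tsum_congr fun k => ?_
              have : ‖⟪g k, W (e i)⟫_ℂ‖₊ = ‖⟪W (e i), g k⟫_ℂ‖₊ :=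
                NNReal.coe_injective (norm_inner_symm (g k) (W (e i)))
              rw [this]
          _ ≤ _ := bessel_ennreal hg (W (e i))

lemma finiteDimensional_of_isometric {ι : Type*} (e : HilbertBasis ι ℂ H) (W : H →L[ℂ] H)
    (hfin : ∑' i, (‖W (e i)‖₊ : ℝ≥0∞) ^ 2 ≠ ⊤)
    (K : Submodule ℂ H) (hK : IsClosed (K : Set H))
    (Φ : H → H)
    (hΦ : ∀ f g, f ∈ K → g ∈ K → ⟪Φ f, Φ g⟫_ℂ = ⟪g, f⟫_ℂ ∨ ⟪Φ f, Φ g⟫_ℂ = ⟪f, g⟫_ℂ)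
    (hiso : ∀ f ∈ K, ‖adjoint W (Φ f)‖ = ‖f‖) :
    FiniteDimensional ℂ K := by
  haveI : CompleteSpace K := hK.completeSpace_coe
  obtain ⟨w, b, hb⟩ := exists_hilbertBasis ℂ K
  have hbo : Orthonormal ℂ (fun k : w => (K.subtypeₗᵢ (b k) : H)) :=
    b.orthonormal.comp_linearIsometry K.subtypeₗᵢ
  classical
  have hboit := orthonormal_iff_ite.mp hbo
  have hg : Orthonormal ℂ (fun k : w => Φ ((b k : K) : H)) := by
    classical
    rw [orthonormal_iff_ite]
    intro i j
    have h2 : ⟪((b j : K) : H), ((b i : K) : H)⟫_ℂ = if j = i then 1 else 0 := hboit j i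
    have h3 : ⟪((b i : K) : H), ((b j : K) : H)⟫_ℂ = if i = j then 1 else 0 := hboit i j
    rcases hΦ _ _ (b i : K).2 (b j : K).2 with h4 | h4 <;> rw [h4]
    · rw [h2]; by_cases h : i = j <;> simp [h, eq_comm]
    · rw [h3]
  have hnorm : ∀ k : w, ‖adjoint W (Φ ((b k : K) : H))‖₊ = 1 := by
    intro k
    have h1 : ‖((b k : K) : H)‖ = 1 := by
      have := hbo.1 k
      simpa using this
    have := hiso ((b k : K) : H) (b k : K).2
    rw [h1] at this
    exact NNReal.coe_injective (by simpa using this)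
  have hwfin : Finite w := by
    by_contra hinf
    rw [not_finite_iff_infinite] at hinf
    have hsum : ∑' k : w, (‖adjoint W (Φ ((b k : K) : H))‖₊ : ℝ≥0∞) ^ 2
        ≤ ∑' i, (‖W (e i)‖₊ : ℝ≥0∞) ^ 2 := hs_adjoint_bound e W hg
    simp only [hnorm] at hsum
    rw [ENNReal.coe_one, one_pow, ENNReal.tsum_const_eq_top_of_ne_zero one_ne_zero] at hsum
    exact hfin (top_le_iff.mp hsum)
  haveI : Fintype w := Fintype.ofFinite w
  exact Module.Finite.of_basis b.toOrthonormalBasis.toBasis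

lemma card_le_finrank_of_orthonormal {n : ℕ} {K : Submodule ℂ H} [FiniteDimensional ℂ K]
    {f : Fin n → H} (hf : Orthonormal ℂ f) (hmem : ∀ i, f i ∈ K) :
    n ≤ Module.finrank ℂ K := by
  have h : Orthonormal ℂ (fun i => (⟨f i, hmem i⟩ : K)) := by
    rw [← K.subtypeₗᵢ.orthonormal_comp_iff]
    exact hf
  simpa using h.linearIndependent.fintype_card_le_finrank

/-- If `U U† + V V† = I = U† U + Vᵀ V̄` and `V` is Hilbert–Schmidt, then
`ker U` and `ker U†` are finite-dimensional with `dim (ker U) = dim (ker U†) < ∞`. -/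
theorem finrank_ker_eq
    [TopologicalSpace.SeparableSpace H]
    -- the antiunitary involution `f ↦ f* = J f`
    (J : H → H)
    (hJ_add : ∀ f g, J (f + g) = J f + J g)
    (hJ_smul : ∀ (c : ℂ) (f : H), J (c • f) = (starRingEnd ℂ) c • J f)
    (hJ_invol : ∀ f, J (J f) = f)
    (hJ_inner : ∀ f g : H, ⟪J f, J g⟫_ℂ = ⟪g, f⟫_ℂ)
    (U V Vbar Vt : H →L[ℂ] H)
    (hVbar : ∀ f, Vbar f = J (V (J f)))
    (hVt : ∀ f, Vt f = J (adjoint V (J f)))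
    (h1 : U ∘L adjoint U + V ∘L adjoint V = 1)
    (h2 : adjoint U ∘L U + Vt ∘L Vbar = 1)
    (hV : IsHilbertSchmidt V) :
    FiniteDimensional ℂ (LinearMap.ker (U : H →ₗ[ℂ] H)) ∧
    FiniteDimensional ℂ (LinearMap.ker (adjoint U : H →ₗ[ℂ] H)) ∧
    Module.finrank ℂ (LinearMap.ker (U : H →ₗ[ℂ] H)) = Module.finrank ℂ (LinearMap.ker (adjoint U : H →ₗ[ℂ] H)) := by
  
  classical
  obtain ⟨ι, e, hsum⟩ := hV
  -- norms from equal inner products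
  have norm_eq : ∀ x y : H, ⟪x, x⟫_ℂ = ⟪y, y⟫_ℂ → ‖x‖ = ‖y‖ := by
    intro x y h
    have hx := inner_self_eq_norm_sq (𝕜 := ℂ) x
    have hy := inner_self_eq_norm_sq (𝕜 := ℂ) y
    have hsq : ‖x‖ ^ 2 = ‖y‖ ^ 2 := by rw [← hx, ← hy, h]
    have := congrArg Real.sqrt hsq
    rwa [Real.sqrt_sq (norm_nonneg x), Real.sqrt_sq (norm_nonneg y)] at this
  -- pointwise versions of h1 and h2
  have h1' : ∀ f, U (adjoint U f) + V (adjoint V f) = f := by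
    intro f
    have := DFunLike.congr_fun h1 f
    simpa using this
  have h2' : ∀ f, adjoint U (U f) + Vt (Vbar f) = f := by
    intro f
    have := DFunLike.congr_fun h2 f
    simpa using this
  -- for f in ker U†:  V V† f = f
  have hker2 : ∀ f, adjoint U f = 0 → V (adjoint V f) = f := by
    intro f hf
    have := h1' f
    rw [hf] at this
    simpa using this
  -- for f in ker U:  V† V (J f) = J f
  have hker1 : ∀ f, U f = 0 → adjoint V (V (J f)) = J f := by
    intro f hf
    have := h2' f
    rw [hf] at this
    simp only [map_zero, zero_add] at this
    rw [hVt, hVbar, hJ_invol] at this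
    have := congrArg J this
    rwa [hJ_invol] at this
  -- summability bounds
  have hsum' : Summable fun i => ‖V (e i)‖₊ ^ 2 := by
    rw [← NNReal.summable_coe]
    push_cast
    exact hsum
  have hfinV : ∑' i, (‖V (e i)‖₊ : ℝ≥0∞) ^ 2 ≠ ⊤ := by
    have : ∑' i, (‖V (e i)‖₊ : ℝ≥0∞) ^ 2 = ((∑' i, ‖V (e i)‖₊ ^ 2 : ℝ≥0) : ℝ≥0∞) := by
      rw [ENNReal.coe_tsum hsum']
      push_cast
      rfl
    rw [this]
    exact ENNReal.coe_ne_top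
  have hfinVadj : ∑' i, (‖adjoint V (e i)‖₊ : ℝ≥0∞) ^ 2 ≠ ⊤ :=
    ne_top_of_le_ne_top hfinV (hs_adjoint_bound e V e.orthonormal)
  -- finite dimensionality of ker U†
  haveI hfd2 : FiniteDimensional ℂ (LinearMap.ker (adjoint U : H →ₗ[ℂ] H)) := by
    apply finiteDimensional_of_isometric e V hfinV _ (ContinuousLinearMap.isClosed_ker _) id
    · intro f g hf hg
      right
      rfl
    · intro f hf
      have hf0 : adjoint U f = 0 := hf
      show ‖adjoint V f‖ = ‖f‖
      apply norm_eq
      rw [adjoint_inner_left V (adjoint V f) f, hker2 f hf0]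
  -- finite dimensionality of ker U
  haveI hfd1 : FiniteDimensional ℂ (LinearMap.ker (U : H →ₗ[ℂ] H)) := by
    apply finiteDimensional_of_isometric e (adjoint V) hfinVadj _
      (ContinuousLinearMap.isClosed_ker _) J
    · intro f g hf hg
      left
      exact hJ_inner f g
    · intro f hf
      have hf0 : U f = 0 := hf
      rw [adjoint_adjoint]
      apply norm_eq
      rw [← adjoint_inner_right V (J f) (V (J f)), hker1 f hf0, hJ_inner]
  refine ⟨hfd1, hfd2, le_antisymm ?_ ?_⟩
  · -- map orthonormal basis of ker U into ker U† via  f ↦ V (J f)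
    set K1 := LinearMap.ker (U : H →ₗ[ℂ] H)
    set B := stdOrthonormalBasis ℂ K1
    set f : Fin (Module.finrank ℂ K1) → H := fun i => ((B i : K1) : H) with hfdef
    have hfmem : ∀ i, U (f i) = 0 := fun i => (B i : K1).2
    have hfo : Orthonormal ℂ f := B.orthonormal.comp_linearIsometry K1.subtypeₗᵢ
    have hfit := orthonormal_iff_ite.mp hfo
    set h : Fin (Module.finrank ℂ K1) → H := fun i => V (J (f i)) with hhdef
    have hho : Orthonormal ℂ h := by
      rw [orthonormal_iff_ite]
      intro i j
      have : ⟪h i, h j⟫_ℂ = ⟪J (f i), J (f j)⟫_ℂ := by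
        rw [hhdef]
        simp only
        rw [← adjoint_inner_right V (J (f i)) (V (J (f j))), hker1 (f j) (hfmem j)]
      rw [this, hJ_inner, hfit j i]
      by_cases hij : i = j
      · simp [hij]
      · rw [if_neg (fun hh => hij hh.symm), if_neg hij]
    have hhmem : ∀ i, h i ∈ LinearMap.ker (adjoint U : H →ₗ[ℂ] H) := by
      intro i
      have hV' : adjoint V (h i) = J (f i) := hker1 (f i) (hfmem i)
      have hU : U (adjoint U (h i)) = 0 := by
        have h7 := h1' (h i)
        rw [hV'] at h7
        have h6 : U (adjoint U (h i)) = h i - V (J (f i)) := eq_sub_of_add_eq h7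
        rw [h6, hhdef]
        simp only [sub_self]
      have : ⟪adjoint U (h i), adjoint U (h i)⟫_ℂ = 0 := by
        rw [adjoint_inner_left U (adjoint U (h i)) (h i), hU, inner_zero_right]
      exact LinearMap.mem_ker.mpr (inner_self_eq_zero.mp this)
    exact card_le_finrank_of_orthonormal hho hhmem
  · -- map orthonormal basis of ker U† into ker U via  g ↦ J (V† g)
    set K2 := LinearMap.ker (adjoint U : H →ₗ[ℂ] H)
    set B := stdOrthonormalBasis ℂ K2
    set g : Fin (Module.finrank ℂ K2) → H := fun i => ((B i : K2) : H) with hgdef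
    have hgmem : ∀ i, adjoint U (g i) = 0 := fun i => (B i : K2).2
    have hgo : Orthonormal ℂ g := B.orthonormal.comp_linearIsometry K2.subtypeₗᵢ
    have hgit := orthonormal_iff_ite.mp hgo
    set u : Fin (Module.finrank ℂ K2) → H := fun i => J (adjoint V (g i)) with hudef
    have huo : Orthonormal ℂ u := by
      rw [orthonormal_iff_ite]
      intro i j
      have : ⟪u i, u j⟫_ℂ = ⟪g j, g i⟫_ℂ := by
        rw [hudef]
        simp only
        rw [hJ_inner, adjoint_inner_left V (adjoint V (g i)) (g j), hker2 (g i) (hgmem i)]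
      rw [this, hgit j i]
      by_cases hij : i = j
      · simp [hij]
      · rw [if_neg (fun hh => hij hh.symm), if_neg hij]
    have humem : ∀ i, u i ∈ LinearMap.ker (U : H →ₗ[ℂ] H) := by
      intro i
      have hVt' : Vt (Vbar (u i)) = u i := by
        rw [hVbar, hudef]
        simp only
        rw [hJ_invol, hker2 (g i) (hgmem i), hVt, hJ_invol]
      have hU : adjoint U (U (u i)) = 0 := by
        have h7 := h2' (u i)
        rw [hVt'] at h7
        have h5 : adjoint U (U (u i)) = u i - u i := eq_sub_of_add_eq h7
        rw [h5, sub_self]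
      have : ⟪U (u i), U (u i)⟫_ℂ = 0 := by
        rw [← adjoint_inner_right U (u i) (U (u i)), hU, inner_zero_right]
      exact LinearMap.mem_ker.mpr (inner_self_eq_zero.mp this)
    exact card_le_finrank_of_orthonormal huo humem
end

section
/- Suppose bounded operators U, V on H satisfy the orthogonality relations U U† + V V† = I = U† U + Vᵀ V̄ and U Vᵀ + V Uᵀ = 0 = U† V + Vᵀ Ū. Let P₀ be the orthogonal projection onto ker U† and Q₀ the orthogonal projection onto ker U, and define Q̄₀ by Q̄₀ f = (Q₀ f*)*. Then P₀ V = V Q̄₀; in particular V maps the subspace { f* : f ∈ (ker U)^⊥ } into (ker U†)^⊥, and Vᵀ maps { g* : g ∈ (ker U†)^⊥ } into (ker U)^⊥. -/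
open scoped InnerProductSpace
open ContinuousLinearMap

/-- Under the orthogonality relations, with `P₀` the orthogonal projection
onto `ker U†`, `Q₀` the orthogonal projection onto `ker U` and `Q̄₀ f = (Q₀ f*)*`, one has
`P₀ V = V Q̄₀`; in particular `V` maps `{ f* : f ∈ (ker U)ᗮ }` into `(ker U†)ᗮ` and
`Vᵀ` maps `{ g* : g ∈ (ker U†)ᗮ }` into `(ker U)ᗮ`. -/
theorem proj_intertwines_V
    {H : Type*} [NormedAddCommGroup H] [InnerProductSpace ℂ H] [CompleteSpace H]
    [TopologicalSpace.SeparableSpace H]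
    -- the antiunitary involution `f ↦ f* = J f`
    (J : H → H)
    (hJ_add : ∀ f g, J (f + g) = J f + J g)
    (hJ_smul : ∀ (c : ℂ) (f : H), J (c • f) = (starRingEnd ℂ) c • J f)
    (hJ_invol : ∀ f, J (J f) = f)
    (hJ_inner : ∀ f g : H, ⟪J f, J g⟫_ℂ = ⟪g, f⟫_ℂ)
    (U V Ubar Vbar Ut Vt : H →L[ℂ] H)
    (hUbar : ∀ f, Ubar f = J (U (J f)))
    (hVbar : ∀ f, Vbar f = J (V (J f)))
    (hUt : ∀ f, Ut f = J (adjoint U (J f)))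
    (hVt : ∀ f, Vt f = J (adjoint V (J f)))
    -- the orthogonality relations
    (h1 : U ∘L adjoint U + V ∘L adjoint V = 1)
    (h2 : adjoint U ∘L U + Vt ∘L Vbar = 1)
    (h3 : U ∘L Vt + V ∘L Ut = 0)
    (h4 : adjoint U ∘L V + Vt ∘L Ubar = 0)
    -- `P₀` is the orthogonal projection onto `ker U†`
    (P₀ : H →L[ℂ] H)
    (hP₀idem : P₀ ∘L P₀ = P₀) (hP₀sa : adjoint P₀ = P₀)
    (hP₀ran : LinearMap.range (P₀ : H →ₗ[ℂ] H) = LinearMap.ker (adjoint U : H →ₗ[ℂ] H))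
    -- `Q₀` is the orthogonal projection onto `ker U`, and `Q̄₀ f = (Q₀ f*)*`
    (Q₀ Q₀bar : H →L[ℂ] H)
    (hQ₀idem : Q₀ ∘L Q₀ = Q₀) (hQ₀sa : adjoint Q₀ = Q₀)
    (hQ₀ran : LinearMap.range (Q₀ : H →ₗ[ℂ] H) = LinearMap.ker (U : H →ₗ[ℂ] H))
    (hQ₀bar : ∀ f, Q₀bar f = J (Q₀ (J f))) :
    P₀ ∘L V = V ∘L Q₀bar ∧
    (∀ f ∈ (LinearMap.ker (U : H →ₗ[ℂ] H))ᗮ, V (J f) ∈ (LinearMap.ker (adjoint U : H →ₗ[ℂ] H))ᗮ) ∧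
    (∀ g ∈ (LinearMap.ker (adjoint U : H →ₗ[ℂ] H))ᗮ, Vt (J g) ∈ (LinearMap.ker (U : H →ₗ[ℂ] H))ᗮ) := by
  -- basic facts about `J`
  have hJ0 : J 0 = 0 := by
    have := hJ_smul 0 0
    simpa using this
  -- pointwise fixed-point facts for the projections
  have hP₀fix : ∀ x ∈ LinearMap.ker (adjoint U : H →ₗ[ℂ] H), P₀ x = x := by
    intro x hx
    rw [← hP₀ran] at hx
    obtain ⟨y, rfl⟩ := hx
    have := congrArg (fun A : H →L[ℂ] H => A y) hP₀idem
    simpa using this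
  have hQ₀fix : ∀ x ∈ LinearMap.ker (U : H →ₗ[ℂ] H), Q₀ x = x := by
    intro x hx
    rw [← hQ₀ran] at hx
    obtain ⟨y, rfl⟩ := hx
    have := congrArg (fun A : H →L[ℂ] H => A y) hQ₀idem
    simpa using this
  have hUadjP₀ : ∀ x, adjoint U (P₀ x) = 0 := by
    intro x
    have : P₀ x ∈ LinearMap.ker (adjoint U : H →ₗ[ℂ] H) := hP₀ran ▸ ⟨x, rfl⟩
    exact this
  have hUQ₀ : ∀ x, U (Q₀ x) = 0 := by
    intro x
    have : Q₀ x ∈ LinearMap.ker (U : H →ₗ[ℂ] H) := hQ₀ran ▸ ⟨x, rfl⟩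
    exact this
  -- pointwise orthogonality relations
  have h3' : ∀ x, U (Vt x) = -(V (Ut x)) := by
    intro x
    have := congrArg (fun A : H →L[ℂ] H => A x) h3
    simp only [add_apply, comp_apply, zero_apply] at this
    exact eq_neg_of_add_eq_zero_left this
  have h4' : ∀ x, adjoint U (V x) = -(Vt (Ubar x)) := by
    intro x
    have := congrArg (fun A : H →L[ℂ] H => A x) h4
    simp only [add_apply, comp_apply, zero_apply] at this
    exact eq_neg_of_add_eq_zero_left this
  -- self-adjointness of `P₀`, `Q₀` in inner-product form
  have hP₀sa' : ∀ a b : H, ⟪P₀ a, b⟫_ℂ = ⟪a, P₀ b⟫_ℂ := by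
    intro a b
    nth_rewrite 1 [← hP₀sa]
    exact adjoint_inner_left P₀ b a
  have hQ₀sa' : ∀ a b : H, ⟪Q₀ a, b⟫_ℂ = ⟪a, Q₀ b⟫_ℂ := by
    intro a b
    nth_rewrite 1 [← hQ₀sa]
    exact adjoint_inner_left Q₀ b a
  -- self-adjointness of `Q₀bar`
  have hQbar_sa : ∀ a b : H, ⟪Q₀bar a, b⟫_ℂ = ⟪a, Q₀bar b⟫_ℂ := by
    intro a b
    calc ⟪Q₀bar a, b⟫_ℂ = ⟪J (Q₀ (J a)), J (J b)⟫_ℂ := by rw [hQ₀bar, hJ_invol]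
      _ = ⟪J b, Q₀ (J a)⟫_ℂ := hJ_inner _ _
      _ = ⟪Q₀ (J b), J a⟫_ℂ := by rw [hQ₀sa']
      _ = ⟪J (J (Q₀ (J b))), J a⟫_ℂ := by rw [hJ_invol]
      _ = ⟪a, J (Q₀ (J b))⟫_ℂ := hJ_inner _ _
      _ = ⟪a, Q₀bar b⟫_ℂ := by rw [hQ₀bar]
  -- `Q₀bar` fixes everything in the "conjugate kernel"
  have hfix : ∀ y : H, U (J y) = 0 → Q₀bar y = y := by
    intro y hy
    have h1' : Q₀ (J y) = J y := hQ₀fix _ hy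
    rw [hQ₀bar, h1', hJ_invol]
  -- `Q₀bar` is idempotent
  have hQbar_idem : ∀ x, Q₀bar (Q₀bar x) = Q₀bar x := by
    intro x
    have : Q₀ (Q₀ (J x)) = Q₀ (J x) := by
      have := congrArg (fun A : H →L[ℂ] H => A (J x)) hQ₀idem
      simpa using this
    rw [hQ₀bar, hQ₀bar x, hJ_invol, this]
  -- Claim A : `V (Q₀bar x)` lies in `ker U†`
  have hA : ∀ x, adjoint U (V (Q₀bar x)) = 0 := by
    intro x
    have hUb : Ubar (Q₀bar x) = 0 := by
      rw [hUbar, hQ₀bar, hJ_invol, hUQ₀, hJ0]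
    rw [h4', hUb, map_zero, neg_zero]
  have hAfix : ∀ x, P₀ (V (Q₀bar x)) = V (Q₀bar x) := by
    intro x
    exact hP₀fix _ (LinearMap.mem_ker.mpr (hA x))
  -- Claim B' : `adjoint V (P₀ g)` is fixed by `Q₀bar`
  have hB' : ∀ g : H, Q₀bar (adjoint V (P₀ g)) = adjoint V (P₀ g) := by
    intro g
    apply hfix
    have hJV : J (adjoint V (P₀ g)) = Vt (J (P₀ g)) := by
      rw [hVt, hJ_invol]
    rw [hJV, h3', hUt, hJ_invol, hUadjP₀, hJ0, map_zero, neg_zero]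
  -- Claim B : `P₀ (V w) = 0` whenever `Q₀bar w = 0`
  have hB : ∀ w : H, Q₀bar w = 0 → P₀ (V w) = 0 := by
    intro w hw
    have key : ∀ g : H, ⟪g, P₀ (V w)⟫_ℂ = 0 := by
      intro g
      calc ⟪g, P₀ (V w)⟫_ℂ = ⟪P₀ g, V w⟫_ℂ := (hP₀sa' g (V w)).symm
        _ = ⟪adjoint V (P₀ g), w⟫_ℂ := (adjoint_inner_left V w (P₀ g)).symm
        _ = ⟪Q₀bar (adjoint V (P₀ g)), w⟫_ℂ := by rw [hB']
        _ = ⟪adjoint V (P₀ g), Q₀bar w⟫_ℂ := hQbar_sa _ _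
        _ = 0 := by rw [hw, inner_zero_right]
    have := key (P₀ (V w))
    exact inner_self_eq_zero.mp this
  -- the main intertwining identity
  have hmain : P₀ ∘L V = V ∘L Q₀bar := by
    ext f
    have hdec : P₀ (V (f - Q₀bar f)) = 0 := by
      apply hB
      rw [map_sub, hQbar_idem, sub_self]
    have : P₀ (V f) - P₀ (V (Q₀bar f)) = 0 := by
      rw [← map_sub P₀, ← map_sub V]
      exact hdec
    simp only [comp_apply]
    rw [sub_eq_zero.mp this, hAfix]
  refine ⟨hmain, ?_, ?_⟩
  · -- V maps J((ker U)ᗮ) into (ker U†)ᗮ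
    intro f hf
    rw [Submodule.mem_orthogonal]
    intro u hu
    have hQf : Q₀ f = 0 := by
      have : ⟪Q₀ f, Q₀ f⟫_ℂ = 0 := by
        have hmem : Q₀ (Q₀ f) ∈ LinearMap.ker (U : H →ₗ[ℂ] H) := hQ₀ran ▸ ⟨Q₀ f, rfl⟩
        rw [← hQ₀sa' (Q₀ f) f]
        exact hf _ hmem
      exact inner_self_eq_zero.mp this
    have hQbarJf : Q₀bar (J f) = 0 := by
      rw [hQ₀bar, hJ_invol, hQf, hJ0]
    have hPu : P₀ u = u := hP₀fix u hu
    have hPV : P₀ (V (J f)) = V (Q₀bar (J f)) := by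
      have := congrArg (fun A : H →L[ℂ] H => A (J f)) hmain
      simpa using this
    calc ⟪u, V (J f)⟫_ℂ = ⟪P₀ u, V (J f)⟫_ℂ := by rw [hPu]
      _ = ⟪u, P₀ (V (J f))⟫_ℂ := hP₀sa' _ _
      _ = ⟪u, V (Q₀bar (J f))⟫_ℂ := by rw [hPV]
      _ = 0 := by rw [hQbarJf, map_zero, inner_zero_right]
  · -- Vᵀ maps J((ker U†)ᗮ) into (ker U)ᗮ
    intro g hg
    rw [Submodule.mem_orthogonal]
    intro x hx
    have hVtJg : Vt (J g) = J (adjoint V g) := by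
      rw [hVt, hJ_invol]
    have hQx : Q₀ x = x := hQ₀fix x hx
    have hQbarJx : Q₀bar (J x) = J x := by
      rw [hQ₀bar, hJ_invol, hQx]
    have hPVJx : P₀ (V (J x)) = V (J x) := by
      have := congrArg (fun A : H →L[ℂ] H => A (J x)) hmain
      simp only [comp_apply] at this
      rw [this, hQbarJx]
    have hmemP : V (J x) ∈ LinearMap.ker (adjoint U : H →ₗ[ℂ] H) := by
      rw [← hP₀ran]
      exact ⟨V (J x), hPVJx⟩
    calc ⟪x, Vt (J g)⟫_ℂ = ⟪J (J x), J (adjoint V g)⟫_ℂ := by rw [hVtJg, hJ_invol]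
      _ = ⟪adjoint V g, J x⟫_ℂ := hJ_inner _ _
      _ = ⟪g, V (J x)⟫_ℂ := adjoint_inner_left V (J x) g
      _ = (starRingEnd ℂ) ⟪V (J x), g⟫_ℂ := (inner_conj_symm _ _).symm
      _ = 0 := by rw [hg _ hmemP, map_zero]
end

section
/- Suppose bounded operators U, V on H satisfy the orthogonality relations U U† + V V† = I = U† U + Vᵀ V̄ and U Vᵀ + V Uᵀ = 0 = U† V + Vᵀ Ū. Then V restricts to an isometric linear bijection from the subspace (ker U)* := { f* : f ∈ ker U } onto ker U†, and V† restricts to the inverse isometry from ker U† onto (ker U)*; in particular V† V g = g for all g ∈ (ker U)* and V V† h = h for all h ∈ ker U†. -/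
open scoped InnerProductSpace
open ContinuousLinearMap

/-- Under the orthogonality relations, `V` restricts to an isometric
bijection from `(ker U)* = { f* : f ∈ ker U }` onto `ker U†`, with inverse isometry the
restriction of `V†`; in particular `V†V g = g` on `(ker U)*` and `VV† h = h` on `ker U†`. -/
theorem V_isometry_on_ker
    {H : Type*} [NormedAddCommGroup H] [InnerProductSpace ℂ H] [CompleteSpace H]
    [TopologicalSpace.SeparableSpace H]
    -- the antiunitary involution `f ↦ f* = J f`
    (J : H → H)
    (hJ_add : ∀ f g, J (f + g) = J f + J g)
    (hJ_smul : ∀ (c : ℂ) (f : H), J (c • f) = (starRingEnd ℂ) c • J f)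
    (hJ_invol : ∀ f, J (J f) = f)
    (hJ_inner : ∀ f g : H, ⟪J f, J g⟫_ℂ = ⟪g, f⟫_ℂ)
    (U V Ubar Vbar Ut Vt : H →L[ℂ] H)
    (hUbar : ∀ f, Ubar f = J (U (J f)))
    (hVbar : ∀ f, Vbar f = J (V (J f)))
    (hUt : ∀ f, Ut f = J (adjoint U (J f)))
    (hVt : ∀ f, Vt f = J (adjoint V (J f)))
    -- the orthogonality relations
    (h1 : U ∘L adjoint U + V ∘L adjoint V = 1)
    (h2 : adjoint U ∘L U + Vt ∘L Vbar = 1)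
    (h3 : U ∘L Vt + V ∘L Ut = 0)
    (h4 : adjoint U ∘L V + Vt ∘L Ubar = 0) :
    Set.BijOn V (J '' (LinearMap.ker (U : H →ₗ[ℂ] H) : Set H)) (LinearMap.ker (adjoint U : H →ₗ[ℂ] H) : Set H) ∧
    (∀ g ∈ J '' (LinearMap.ker (U : H →ₗ[ℂ] H) : Set H), ‖V g‖ = ‖g‖) ∧
    (∀ h ∈ LinearMap.ker (adjoint U : H →ₗ[ℂ] H),
      adjoint V h ∈ J '' (LinearMap.ker (U : H →ₗ[ℂ] H) : Set H) ∧ ‖adjoint V h‖ = ‖h‖) ∧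
    (∀ g ∈ J '' (LinearMap.ker (U : H →ₗ[ℂ] H) : Set H), adjoint V (V g) = g) ∧
    (∀ h ∈ LinearMap.ker (adjoint U : H →ₗ[ℂ] H), V (adjoint V h) = h) := by
  have hJ0 : J 0 = 0 := by
    have h := hJ_smul 0 0
    simpa using h
  -- V† V g = g for g in (ker U)*
  have key1 : ∀ g ∈ J '' (LinearMap.ker (U : H →ₗ[ℂ] H) : Set H), adjoint V (V g) = g := by
    rintro g ⟨f, hf, rfl⟩
    have hf0 : U f = 0 := hf
    have h2f := congrArg (fun A : H →L[ℂ] H => A f) h2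
    simp only [ContinuousLinearMap.add_apply, ContinuousLinearMap.comp_apply,
      ContinuousLinearMap.one_apply] at h2f
    rw [hf0, map_zero, zero_add, hVbar, hVt, hJ_invol] at h2f
    have h2f' := congrArg J h2f
    rwa [hJ_invol] at h2f'
  -- V maps (ker U)* into ker U†
  have key2 : ∀ g ∈ J '' (LinearMap.ker (U : H →ₗ[ℂ] H) : Set H), adjoint U (V g) = 0 := by
    rintro g ⟨f, hf, rfl⟩
    have hf0 : U f = 0 := hf
    have h4f := congrArg (fun A : H →L[ℂ] H => A (J f)) h4
    simp only [ContinuousLinearMap.add_apply, ContinuousLinearMap.comp_apply,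
      ContinuousLinearMap.zero_apply] at h4f
    rw [hUbar, hJ_invol, hf0, hJ0, map_zero, add_zero] at h4f
    exact h4f
  -- V V† h = h for h in ker U†
  have key3 : ∀ h ∈ LinearMap.ker (adjoint U : H →ₗ[ℂ] H), V (adjoint V h) = h := by
    intro h hh
    have hh0 : adjoint U h = 0 := hh
    have h1h := congrArg (fun A : H →L[ℂ] H => A h) h1
    simp only [ContinuousLinearMap.add_apply, ContinuousLinearMap.comp_apply,
      ContinuousLinearMap.one_apply] at h1h
    rw [hh0, map_zero, zero_add] at h1h
    exact h1h
  -- V† h lies in (ker U)*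
  have key4 : ∀ h ∈ LinearMap.ker (adjoint U : H →ₗ[ℂ] H),
      adjoint V h ∈ J '' (LinearMap.ker (U : H →ₗ[ℂ] H) : Set H) := by
    intro h hh
    have hh0 : adjoint U h = 0 := hh
    have h3h := congrArg (fun A : H →L[ℂ] H => A (J h)) h3
    simp only [ContinuousLinearMap.add_apply, ContinuousLinearMap.comp_apply,
      ContinuousLinearMap.zero_apply] at h3h
    rw [hVt, hUt, hJ_invol, hh0, hJ0, map_zero, add_zero] at h3h
    exact ⟨J (adjoint V h), h3h, hJ_invol _⟩
  have norm1 : ∀ g ∈ J '' (LinearMap.ker (U : H →ₗ[ℂ] H) : Set H), ‖V g‖ = ‖g‖ := by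
    intro g hg
    have hk := key1 g hg
    have hinner : ⟪V g, V g⟫_ℂ = ⟪g, g⟫_ℂ := by
      rw [← ContinuousLinearMap.adjoint_inner_left, hk]
    have hsq : ‖V g‖ ^ 2 = ‖g‖ ^ 2 := by
      have := hinner
      rw [inner_self_eq_norm_sq_to_K, inner_self_eq_norm_sq_to_K] at this
      exact_mod_cast this
    calc ‖V g‖ = Real.sqrt (‖V g‖ ^ 2) := (Real.sqrt_sq (norm_nonneg _)).symm
      _ = Real.sqrt (‖g‖ ^ 2) := by rw [hsq]
      _ = ‖g‖ := Real.sqrt_sq (norm_nonneg _)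
  have norm2 : ∀ h ∈ LinearMap.ker (adjoint U : H →ₗ[ℂ] H), ‖adjoint V h‖ = ‖h‖ := by
    intro h hh
    have hk := key3 h hh
    have hinner : ⟪adjoint V h, adjoint V h⟫_ℂ = ⟪h, h⟫_ℂ := by
      conv_lhs => rw [ContinuousLinearMap.adjoint_inner_left, hk]
    have hsq : ‖adjoint V h‖ ^ 2 = ‖h‖ ^ 2 := by
      have := hinner
      rw [inner_self_eq_norm_sq_to_K, inner_self_eq_norm_sq_to_K] at this
      exact_mod_cast this
    calc ‖adjoint V h‖ = Real.sqrt (‖adjoint V h‖ ^ 2) := (Real.sqrt_sq (norm_nonneg _)).symm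
      _ = Real.sqrt (‖h‖ ^ 2) := by rw [hsq]
      _ = ‖h‖ := Real.sqrt_sq (norm_nonneg _)
  refine ⟨⟨?_, ?_, ?_⟩, norm1, fun h hh => ⟨key4 h hh, norm2 h hh⟩, key1, key3⟩
  · intro g hg
    exact LinearMap.mem_ker.mpr (key2 g hg)
  · intro g1 hg1 g2 hg2 heq
    rw [← key1 g1 hg1, ← key1 g2 hg2, heq]
  · intro h hh
    exact ⟨adjoint V h, key4 h hh, key3 h hh⟩
end

section
/- Suppose bounded operators U, V on H satisfy the orthogonality relations U U† + V V† = I = U† U + Vᵀ V̄ and U Vᵀ + V Uᵀ = 0 = U† V + Vᵀ Ū, and V is Hilbert–Schmidt. Let Q̄₁ denote the orthogonal projection onto { f* : f ∈ (ker U)^⊥ } and P₁ the orthogonal projection onto (ker U†)^⊥. Then the operator norms satisfy ‖V Q̄₁‖ < 1 and ‖V† P₁‖ < 1. -/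
open scoped InnerProductSpace
open ContinuousLinearMap Filter Metric Topology
set_option linter.unusedSectionVars false

variable {H : Type*} [NormedAddCommGroup H] [InnerProductSpace ℂ H] [CompleteSpace H]

-- helpers
lemma aux_le_of_sq (a b : ℝ) (ha : 0 ≤ a) (hb : 0 ≤ b) (h : a^2 ≤ b^2) : a ≤ b := by
  calc a = Real.sqrt (a^2) := (Real.sqrt_sq ha).symm
    _ ≤ Real.sqrt (b^2) := Real.sqrt_le_sqrt h
    _ = b := Real.sqrt_sq hb

lemma aux_id (A B : H →L[ℂ] H) (hid : A ∘L adjoint A + B ∘L adjoint B = 1) (x : H) :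
    ‖adjoint A x‖^2 + ‖adjoint B x‖^2 = ‖x‖^2 := by
  have h := congrArg (fun T : H →L[ℂ] H => ⟪x, T x⟫_ℂ) hid
  simp only [ContinuousLinearMap.add_apply, ContinuousLinearMap.comp_apply,
    ContinuousLinearMap.one_apply, inner_add_right] at h
  rw [← ContinuousLinearMap.adjoint_inner_left A, ← ContinuousLinearMap.adjoint_inner_left B,
    inner_self_eq_norm_sq_to_K, inner_self_eq_norm_sq_to_K, inner_self_eq_norm_sq_to_K] at h
  exact_mod_cast h

lemma aux_proj (Q : H →L[ℂ] H) (hidem : Q ∘L Q = Q) (hsa : adjoint Q = Q) (f : H) :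
    ‖Q f‖ ≤ ‖f‖ := by
  have h : ⟪Q f, Q f⟫_ℂ = ⟪f, Q f⟫_ℂ := by
    rw [← ContinuousLinearMap.adjoint_inner_right Q f (Q f), hsa]
    congr 1
    exact congrArg (fun T : H →L[ℂ] H => T f) hidem
  have h2 := (inner_self_eq_norm_sq_to_K (𝕜 := ℂ) (Q f)).symm.trans h
  have h3 : ‖Q f‖^2 ≤ ‖f‖ * ‖Q f‖ := by
    have := norm_inner_le_norm (𝕜 := ℂ) f (Q f)
    calc ‖Q f‖^2 = ‖⟪f, Q f⟫_ℂ‖ := by rw [← h2]; rw [norm_pow]; simp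
      _ ≤ ‖f‖ * ‖Q f‖ := this
  rcases le_or_gt ‖Q f‖ ‖f‖ with h4 | h4
  · exact h4
  · exfalso
    have h0 : 0 < ‖Q f‖ := lt_of_le_of_lt (norm_nonneg f) h4
    nlinarith


lemma aux_hs_compact (V : H →L[ℂ] H) (hV : IsHilbertSchmidt V) : IsCompactOperator ⇑V := by
  classical
  obtain ⟨ι, e, hsum⟩ := hV
  refine ⟨closure (⇑V '' Metric.closedBall 0 1), ?_,
    mem_of_superset (Metric.closedBall_mem_nhds 0 one_pos)
      (fun x hx => subset_closure ⟨x, hx, rfl⟩)⟩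
  refine TotallyBounded.isCompact_of_isClosed (TotallyBounded.closure ?_) isClosed_closure
  rw [Metric.totallyBounded_iff]
  intro ε hε
  -- choose a finite set with small tail
  have hlt : (∑' i, ‖V (e i)‖^2) - ε^2/16 < ∑' i, ‖V (e i)‖^2 :=
    sub_lt_self _ (by positivity)
  obtain ⟨F, hF0⟩ := (hsum.hasSum.eventually (eventually_gt_nhds hlt)).exists
  have hs := Summable.sum_add_tsum_compl (s := F) hsum
  have hF : ∑' (i : ((F : Set ι)ᶜ : Set ι)), ‖V (e ↑i)‖^2 < ε^2/16 := by
    simp only at hF0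
    linarith
  -- the finite-rank approximation
  set T : ({x // x ∈ F} → ℂ) → H := fun c => ∑ i : {x // x ∈ F}, c i • V (e i) with hT
  have hTcont : Continuous T := by
    apply continuous_finset_sum
    intro i _
    exact (continuous_apply i).smul continuous_const
  have hK : IsCompact (T '' Metric.closedBall 0 1) :=
    (isCompact_closedBall 0 1).image hTcont
  obtain ⟨t, htfin, htsub⟩ := Metric.totallyBounded_iff.1 hK.totallyBounded (ε/2) (by positivity)
  refine ⟨t, htfin, ?_⟩
  rintro x ⟨f, hf, rfl⟩
  rw [Metric.mem_closedBall, dist_zero_right] at hf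
  set c : ι → ℂ := fun i => e.repr f i with hc
  have hcs : HasSum (fun i => c i • V (e i)) (V f) := by
    have h' := (e.hasSum_repr f).mapL V
    simpa using h'
  have hc2 : ∀ i, ‖c i‖ = ‖⟪e i, f⟫_ℂ‖ := by
    intro i
    have : c i = e.repr f i := rfl
    rw [this, e.repr_apply_apply]
  have hcsq : Summable fun i => ‖c i‖^2 := by
    have h0 := e.orthonormal.inner_products_summable (x := f)
    apply h0.congr
    intro i
    rw [hc2 i]
  have hcsq_le : ∑' i, ‖c i‖^2 ≤ 1 := by
    have h1 := e.orthonormal.tsum_inner_products_le f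
    have h2 : ∑' i, ‖c i‖^2 = ∑' i, ‖⟪e i, f⟫_ℂ‖^2 := by
      congr 1; funext i; rw [hc2 i]
    rw [h2]
    calc ∑' i, ‖⟪e i, f⟫_ℂ‖^2 ≤ ‖f‖^2 := h1
      _ ≤ 1 := by nlinarith [norm_nonneg f]
  have hbound : ∀ i, ‖c i • V (e i)‖ ≤ ε/8 * ‖c i‖^2 + 2/ε * ‖V (e i)‖^2 := by
    intro i
    rw [norm_smul]
    set a := ‖c i‖; set b := ‖V (e i)‖
    have h1 : 8*ε*(a*b) ≤ 8*ε*(ε/8*a^2 + 2/ε*b^2) := by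
      have heq : 8*ε*(ε/8*a^2 + 2/ε*b^2) = ε^2*a^2 + 16*b^2 := by
        field_simp; ring
      rw [heq]; nlinarith [sq_nonneg (ε*a - 4*b)]
    exact le_of_mul_le_mul_left h1 (by positivity)
  have hsummable : Summable fun i => ‖c i • V (e i)‖ :=
    Summable.of_nonneg_of_le (fun i => norm_nonneg _) hbound
      ((hcsq.mul_left _).add (hsum.mul_left _))
  have hsplit := Summable.sum_add_tsum_compl (s := F) hsummable.of_norm
  rw [hcs.tsum_eq] at hsplit
  set R := ∑' (i : ((F : Set ι)ᶜ : Set ι)), c ↑i • V (e ↑i) with hR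
  have hsubn : Summable (fun i : ((F : Set ι)ᶜ : Set ι) => ‖c ↑i • V (e ↑i)‖) :=
    hsummable.subtype _
  have hsubc : Summable (fun i : ((F : Set ι)ᶜ : Set ι) => ε/8 * ‖c ↑i‖^2) :=
    (hcsq.subtype _).mul_left _
  have hsubv : Summable (fun i : ((F : Set ι)ᶜ : Set ι) => 2/ε * ‖V (e ↑i)‖^2) :=
    (hsum.subtype _).mul_left _
  have hRnorm : ‖R‖ ≤ ε/4 := by
    calc ‖R‖ ≤ ∑' (i : ((F : Set ι)ᶜ : Set ι)), ‖c ↑i • V (e ↑i)‖ :=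
          norm_tsum_le_tsum_norm hsubn
      _ ≤ ∑' (i : ((F : Set ι)ᶜ : Set ι)), (ε/8 * ‖c ↑i‖^2 + 2/ε * ‖V (e ↑i)‖^2) :=
          Summable.tsum_le_tsum (fun i => hbound i) hsubn (hsubc.add hsubv)
      _ = ε/8 * (∑' (i : ((F : Set ι)ᶜ : Set ι)), ‖c ↑i‖^2)
          + 2/ε * (∑' (i : ((F : Set ι)ᶜ : Set ι)), ‖V (e ↑i)‖^2) := by
          rw [Summable.tsum_add hsubc hsubv, tsum_mul_left, tsum_mul_left]
      _ ≤ ε/8 * 1 + 2/ε * (ε^2/16) := by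
          have hb1 : (∑' (i : ((F : Set ι)ᶜ : Set ι)), ‖c ↑i‖^2) ≤ 1 := by
            have h0 := Summable.sum_add_tsum_compl (s := F) hcsq
            have hpos : 0 ≤ ∑ i ∈ F, ‖c i‖^2 := Finset.sum_nonneg (fun i _ => sq_nonneg _)
            linarith
          have h8 : (0:ℝ) ≤ ε/8 := by positivity
          have h2e : (0:ℝ) ≤ 2/ε := by positivity
          exact add_le_add (mul_le_mul_of_nonneg_left hb1 h8)
            (mul_le_mul_of_nonneg_left hF.le h2e)
      _ ≤ ε/4 := by
          have : ε/8 * 1 + 2/ε * (ε^2/16) = ε/4 := by field_simp; ring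
          linarith
  -- the finite part lies in K
  have hkmem : T (fun i => c ↑i) ∈ T '' Metric.closedBall 0 1 := by
    refine Set.mem_image_of_mem _ ?_
    rw [mem_closedBall_zero_iff]
    apply (pi_norm_le_iff_of_nonneg zero_le_one).2
    intro i
    calc ‖c ↑i‖ = ‖⟪e ↑i, f⟫_ℂ‖ := hc2 _
      _ ≤ ‖e (↑i : ι)‖ * ‖f‖ := norm_inner_le_norm _ _
      _ ≤ 1 := by rw [e.orthonormal.1]; simpa using hf
  obtain ⟨y, hyt, hy⟩ := Set.mem_iUnion₂.1 (htsub hkmem)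
  refine Set.mem_iUnion₂.2 ⟨y, hyt, ?_⟩
  rw [mem_ball]
  have hTk : T (fun i => c ↑i) = ∑ i ∈ F, c i • V (e i) := by
    rw [hT]
    exact Finset.sum_coe_sort F (fun i => c i • V (e i))
  have hdist1 : dist (V f) (T (fun i => c ↑i)) ≤ ε/4 := by
    rw [dist_eq_norm, hTk]
    have heq : V f - ∑ i ∈ F, c i • V (e i) = R := by
      rw [← hsplit]; abel
    rw [heq]; exact hRnorm
  calc dist (V f) y ≤ dist (V f) (T (fun i => c ↑i)) + dist (T (fun i => c ↑i)) y :=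
        dist_triangle _ _ _
    _ < ε/4 + ε/2 := add_lt_add_of_le_of_lt hdist1 (mem_ball.1 hy)
    _ < ε := by linarith

lemma aux_conj_compact (J : H → H) (hJc : Continuous J) (hJ0 : J 0 = 0)
    (Φ : H → H) (hΦ : IsCompactOperator Φ) :
    IsCompactOperator (fun x => J (Φ (J x))) := by
  obtain ⟨K, hK, hmem⟩ := hΦ
  refine ⟨J '' K, hK.image hJc, ?_⟩
  have h1 : J ⁻¹' (Φ ⁻¹' K) ∈ 𝓝 (0 : H) := by
    apply hJc.continuousAt.preimage_mem_nhds
    rwa [hJ0]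
  exact mem_of_superset h1 (fun x hx => ⟨Φ (J x), hx, rfl⟩)

lemma aux_seq (T : H →L[ℂ] H) (hle : ∀ f, ‖T f‖ ≤ ‖f‖) (hnot : ¬ ‖T‖ < 1) :
    ∃ f : ℕ → H, (∀ n, ‖f n‖ ≤ 1) ∧ Tendsto (fun n => ‖T (f n)‖) atTop (𝓝 1) := by
  have hT1 : ‖T‖ ≤ 1 := T.opNorm_le_bound zero_le_one (fun x => by simpa using hle x)
  have hTeq : ‖T‖ = 1 := le_antisymm hT1 (not_lt.1 hnot)
  have hchoice : ∀ n : ℕ, ∃ x : H, ‖x‖ < 1 ∧ 1 - 1/(n+1) < ‖T x‖ := by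
    intro n
    apply T.exists_lt_apply_of_lt_opNorm
    rw [hTeq]
    have : (0:ℝ) < 1/(n+1) := by positivity
    linarith
  choose f hf1 hf2 using hchoice
  refine ⟨f, fun n => (hf1 n).le, ?_⟩
  have hub : ∀ n, ‖T (f n)‖ ≤ 1 := fun n => (hle (f n)).trans (hf1 n).le
  have hlow : Tendsto (fun n : ℕ => 1 - 1/((n:ℝ)+1)) atTop (𝓝 1) := by
    have h0 := tendsto_one_div_add_atTop_nhds_zero_nat (𝕜 := ℝ)
    have := (tendsto_const_nhds (x := (1:ℝ)) (f := atTop)).sub h0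
    simpa using this
  exact tendsto_of_tendsto_of_tendsto_of_le_of_le hlow tendsto_const_nhds
    (fun n => (hf2 n).le) hub

lemma aux_key (A B : H →L[ℂ] H)
    (hcomp : IsCompactOperator ⇑(B ∘L adjoint B))
    (hid : A ∘L adjoint A + B ∘L adjoint B = 1)
    (g : ℕ → H) (hmem : ∀ n, g n ∈ (LinearMap.ker (adjoint A : H →ₗ[ℂ] H))ᗮ)
    (hle : ∀ n, ‖g n‖ ≤ 1)
    (hBg : Tendsto (fun n => ‖adjoint B (g n)‖) atTop (𝓝 1)) : False := by
  have hidpt := aux_id A B hid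
  -- ‖A† gₙ‖ → 0
  have hA2 : Tendsto (fun n => ‖adjoint A (g n)‖^2) atTop (𝓝 0) := by
    have hup : ∀ n, ‖adjoint A (g n)‖^2 ≤ 1 - ‖adjoint B (g n)‖^2 := by
      intro n
      have h0 := hidpt (g n)
      nlinarith [hle n, norm_nonneg (g n)]
    have hdn : Tendsto (fun n => 1 - ‖adjoint B (g n)‖^2) atTop (𝓝 0) := by
      have h' := (tendsto_const_nhds (x := (1:ℝ)) (f := atTop)).sub (hBg.pow 2)
      simpa using h'
    exact squeeze_zero (fun n => sq_nonneg _) hup hdn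
  have hA : Tendsto (fun n => ‖adjoint A (g n)‖) atTop (𝓝 0) := by
    have h' := (Real.continuous_sqrt.tendsto 0).comp hA2
    have heq : (fun n => Real.sqrt (‖adjoint A (g n)‖^2)) = fun n => ‖adjoint A (g n)‖ :=
      funext fun n => Real.sqrt_sq (norm_nonneg _)
    rw [show Real.sqrt 0 = 0 from Real.sqrt_zero] at h'
    exact heq ▸ h'
  -- compact image, extract a convergent subsequence
  have hcomp' : IsCompactOperator ⇑((B ∘L adjoint B : H →L[ℂ] H) : H →ₗ[ℂ] H) := by
    rwa [ContinuousLinearMap.coe_coe]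
  have hKc := hcomp'.isCompact_closure_image_closedBall 1
  have hmemK : ∀ n, (B ∘L adjoint B) (g n) ∈
      closure (⇑((B ∘L adjoint B : H →L[ℂ] H) : H →ₗ[ℂ] H) '' Metric.closedBall 0 1) := by
    intro n
    apply subset_closure
    exact ⟨g n, by simpa [mem_closedBall_zero_iff] using hle n, rfl⟩
  obtain ⟨a, _, φ, hφ, hconv⟩ := hKc.tendsto_subseq hmemK
  -- g ∘ φ converges to a
  have hpt : ∀ n, g n = A (adjoint A (g n)) + (B ∘L adjoint B) (g n) := by
    intro n
    have h0 := congrArg (fun T : H →L[ℂ] H => T (g n)) hid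
    simp only [ContinuousLinearMap.add_apply, ContinuousLinearMap.comp_apply,
      ContinuousLinearMap.one_apply] at h0
    exact h0.symm
  have hAA : Tendsto (fun k => A (adjoint A (g (φ k)))) atTop (𝓝 0) := by
    have h0 := (hA.comp hφ.tendsto_atTop).const_mul ‖A‖
    rw [mul_zero] at h0
    exact squeeze_zero_norm (a := fun k => ‖A‖ * ‖adjoint A (g (φ k))‖)
      (fun k => A.le_opNorm _) h0
  have hgconv : Tendsto (fun k => g (φ k)) atTop (𝓝 a) := by
    have h0 := hAA.add hconv
    rw [zero_add] at h0
    apply h0.congr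
    intro k
    exact (hpt (φ k)).symm
  have haorth : a ∈ (LinearMap.ker (adjoint A : H →ₗ[ℂ] H))ᗮ :=
    (Submodule.isClosed_orthogonal _).mem_of_tendsto hgconv
      (Eventually.of_forall fun k => hmem (φ k))
  have haker : adjoint A a = 0 := by
    have h1 : Tendsto (fun k => ‖adjoint A (g (φ k))‖) atTop (𝓝 ‖adjoint A a‖) :=
      (((adjoint A).continuous.tendsto a).comp hgconv).norm
    have h2 : Tendsto (fun k => ‖adjoint A (g (φ k))‖) atTop (𝓝 0) :=
      hA.comp hφ.tendsto_atTop
    exact norm_eq_zero.mp (tendsto_nhds_unique h1 h2)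
  have ha0 : a = 0 := by
    have hk : a ∈ LinearMap.ker (adjoint A : H →ₗ[ℂ] H) := LinearMap.mem_ker.mpr haker
    have h0 := (Submodule.mem_orthogonal _ a).mp haorth a hk
    exact inner_self_eq_zero.mp h0
  have hfin : Tendsto (fun k => ‖adjoint B (g (φ k))‖) atTop (𝓝 ‖adjoint B a‖) :=
    (((adjoint B).continuous.tendsto a).comp hgconv).norm
  have hfin2 : Tendsto (fun k => ‖adjoint B (g (φ k))‖) atTop (𝓝 1) :=
    hBg.comp hφ.tendsto_atTop
  have h1 : (1:ℝ) = ‖adjoint B a‖ := tendsto_nhds_unique hfin2 hfin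
  rw [ha0] at h1
  simp at h1


/-- Under the orthogonality relations, with `V` Hilbert–Schmidt, `Q̄₁` the
orthogonal projection onto `{ f* : f ∈ (ker U)ᗮ }` and `P₁` the orthogonal projection onto
`(ker U†)ᗮ`, the operator norms satisfy `‖V Q̄₁‖ < 1` and `‖V† P₁‖ < 1`. -/
theorem norm_V_lt_one
    [TopologicalSpace.SeparableSpace H]
    -- the antiunitary involution `f ↦ f* = J f`
    (J : H → H)
    (hJ_add : ∀ f g, J (f + g) = J f + J g)
    (hJ_smul : ∀ (c : ℂ) (f : H), J (c • f) = (starRingEnd ℂ) c • J f)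
    (hJ_invol : ∀ f, J (J f) = f)
    (hJ_inner : ∀ f g : H, ⟪J f, J g⟫_ℂ = ⟪g, f⟫_ℂ)
    (U V Ubar Vbar Ut Vt : H →L[ℂ] H)
    (hUbar : ∀ f, Ubar f = J (U (J f)))
    (hVbar : ∀ f, Vbar f = J (V (J f)))
    (hUt : ∀ f, Ut f = J (adjoint U (J f)))
    (hVt : ∀ f, Vt f = J (adjoint V (J f)))
    -- the orthogonality relations
    (h1 : U ∘L adjoint U + V ∘L adjoint V = 1)
    (h2 : adjoint U ∘L U + Vt ∘L Vbar = 1)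
    (h3 : U ∘L Vt + V ∘L Ut = 0)
    (h4 : adjoint U ∘L V + Vt ∘L Ubar = 0)
    (hV : IsHilbertSchmidt V)
    -- `Q̄₁` is the orthogonal projection onto `{ f* : f ∈ (ker U)ᗮ }`
    (Q₁bar : H →L[ℂ] H)
    (hQ₁idem : Q₁bar ∘L Q₁bar = Q₁bar) (hQ₁sa : adjoint Q₁bar = Q₁bar)
    (hQ₁ran : Set.range Q₁bar = J '' ((LinearMap.ker (U : H →ₗ[ℂ] H))ᗮ : Set H))
    -- `P₁` is the orthogonal projection onto `(ker U†)ᗮ`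
    (P₁ : H →L[ℂ] H)
    (hP₁idem : P₁ ∘L P₁ = P₁) (hP₁sa : adjoint P₁ = P₁)
    (hP₁ran : LinearMap.range (P₁ : H →ₗ[ℂ] H) = (LinearMap.ker (adjoint U : H →ₗ[ℂ] H))ᗮ) :
    ‖V ∘L Q₁bar‖ < 1 ∧ ‖adjoint V ∘L P₁‖ < 1 := by
  -- basic facts about J
  have hJ0 : J 0 = 0 := by
    have := hJ_smul 0 0
    simpa using this
  have hJnorm : ∀ x, ‖J x‖ = ‖x‖ := by
    intro x
    have h0 := hJ_inner x x
    rw [inner_self_eq_norm_sq_to_K, inner_self_eq_norm_sq_to_K] at h0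
    have h1' : ‖J x‖^2 = ‖x‖^2 := by exact_mod_cast h0
    calc ‖J x‖ = Real.sqrt (‖J x‖^2) := (Real.sqrt_sq (norm_nonneg _)).symm
      _ = Real.sqrt (‖x‖^2) := by rw [h1']
      _ = ‖x‖ := Real.sqrt_sq (norm_nonneg _)
  have hJsub : ∀ x y, J (x - y) = J x - J y := by
    intro x y
    have h0 : x - y = x + (-1 : ℂ) • y := by
      rw [neg_one_smul]; abel
    rw [h0, hJ_add, hJ_smul]
    simp [sub_eq_add_neg]
  have hJc : Continuous J := by
    apply Isometry.continuous
    intro x y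
    rw [edist_dist, edist_dist, dist_eq_norm, dist_eq_norm, ← hJsub, hJnorm]
  have hJswap : ∀ a b, ⟪J a, b⟫_ℂ = ⟪J b, a⟫_ℂ := by
    intro a b
    conv_lhs => rw [← hJ_invol b]
    exact hJ_inner a (J b)
  -- adjoint Vt = Vbar
  have hadjVt : adjoint Vt = Vbar := by
    symm
    rw [eq_adjoint_iff]
    intro x y
    rw [hVbar, hVt]
    calc ⟪J (V (J x)), y⟫_ℂ = ⟪J y, V (J x)⟫_ℂ := hJswap _ _
      _ = ⟪adjoint V (J y), J x⟫_ℂ := (ContinuousLinearMap.adjoint_inner_left V (J x) (J y)).symm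
      _ = ⟪J (J (adjoint V (J y))), J x⟫_ℂ := by rw [hJ_invol]
      _ = ⟪x, J (adjoint V (J y))⟫_ℂ := hJ_inner _ _
  -- V is compact
  have hVc : IsCompactOperator ⇑V := aux_hs_compact V hV
  -- operator identity for part 1
  have hid1 : adjoint U ∘L adjoint (adjoint U) + Vt ∘L adjoint Vt = 1 := by
    rw [adjoint_adjoint, hadjVt]; exact h2
  have hidpt1 := aux_id (adjoint U) Vt hid1
  -- ‖V y‖ ≤ ‖y‖
  have hVle : ∀ y, ‖V y‖ ≤ ‖y‖ := by
    intro y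
    have h0 := hidpt1 (J y)
    have hVbarJy : adjoint Vt (J y) = J (V y) := by
      rw [hadjVt, hVbar, hJ_invol]
    rw [hVbarJy, hJnorm, hJnorm] at h0
    apply aux_le_of_sq _ _ (norm_nonneg _) (norm_nonneg _)
    nlinarith [sq_nonneg ‖adjoint (adjoint U) (J y)‖]
  -- ‖adjoint V y‖ ≤ ‖y‖
  have hidpt2 := aux_id U V h1
  have hVadjle : ∀ y, ‖adjoint V y‖ ≤ ‖y‖ := by
    intro y
    have h0 := hidpt2 y
    apply aux_le_of_sq _ _ (norm_nonneg _) (norm_nonneg _)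
    nlinarith [sq_nonneg ‖adjoint U y‖]
  constructor
  · -- part 1 : ‖V ∘L Q₁bar‖ < 1
    by_contra hnot
    have hTle : ∀ f, ‖(V ∘L Q₁bar) f‖ ≤ ‖f‖ := by
      intro f
      rw [ContinuousLinearMap.comp_apply]
      exact (hVle _).trans (aux_proj Q₁bar hQ₁idem hQ₁sa f)
    obtain ⟨f, hf1, hf2⟩ := aux_seq _ hTle hnot
    set g : ℕ → H := fun n => J (Q₁bar (f n)) with hg
    have hJg : ∀ n, J (g n) = Q₁bar (f n) := fun n => hJ_invol _
    have hmem : ∀ n, g n ∈ (LinearMap.ker (adjoint (adjoint U) : H →ₗ[ℂ] H))ᗮ := by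
      intro n
      rw [adjoint_adjoint]
      have h0 : Q₁bar (f n) ∈ Set.range ⇑Q₁bar := Set.mem_range_self _
      rw [hQ₁ran] at h0
      obtain ⟨h, hh, hEq⟩ := h0
      have : g n = h := by rw [hg]; simp only; rw [← hEq, hJ_invol]
      rwa [this]
    have hle : ∀ n, ‖g n‖ ≤ 1 := by
      intro n
      rw [hg]
      simp only
      rw [hJnorm]
      exact (aux_proj Q₁bar hQ₁idem hQ₁sa (f n)).trans (hf1 n)
    have hcomp : IsCompactOperator ⇑(Vt ∘L adjoint Vt) := by
      have hfun : ⇑(Vt ∘L adjoint Vt) = fun x => J ((⇑(adjoint V) ∘ ⇑V) (J x)) := by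
        funext x
        rw [ContinuousLinearMap.comp_apply, hadjVt, hVt, hVbar, hJ_invol, Function.comp_apply]
      rw [hfun]
      exact aux_conj_compact J hJc hJ0 _ (hVc.clm_comp (adjoint V))
    have hBg : Tendsto (fun n => ‖adjoint Vt (g n)‖) atTop (𝓝 1) := by
      have heq : (fun n => ‖adjoint Vt (g n)‖) = fun n => ‖(V ∘L Q₁bar) (f n)‖ := by
        funext n
        rw [hadjVt, hVbar, hJg, hJnorm, ContinuousLinearMap.comp_apply]
      rw [heq]
      exact hf2
    exact aux_key (adjoint U) Vt hcomp hid1 g hmem hle hBg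
  · -- part 2 : ‖adjoint V ∘L P₁‖ < 1
    by_contra hnot
    have hTle : ∀ f, ‖(adjoint V ∘L P₁) f‖ ≤ ‖f‖ := by
      intro f
      rw [ContinuousLinearMap.comp_apply]
      exact (hVadjle _).trans (aux_proj P₁ hP₁idem hP₁sa f)
    obtain ⟨f, hf1, hf2⟩ := aux_seq _ hTle hnot
    set g : ℕ → H := fun n => P₁ (f n) with hg
    have hmem : ∀ n, g n ∈ (LinearMap.ker (adjoint U : H →ₗ[ℂ] H))ᗮ := by
      intro n
      rw [← hP₁ran]
      exact LinearMap.mem_range.mpr ⟨f n, rfl⟩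
    have hle : ∀ n, ‖g n‖ ≤ 1 := fun n =>
      (aux_proj P₁ hP₁idem hP₁sa (f n)).trans (hf1 n)
    have hcomp : IsCompactOperator ⇑(V ∘L adjoint V) := by
      rw [ContinuousLinearMap.coe_comp']
      exact hVc.comp_clm (adjoint V)
    have hBg : Tendsto (fun n => ‖adjoint V (g n)‖) atTop (𝓝 1) := by
      have heq : (fun n => ‖adjoint V (g n)‖) = fun n => ‖(adjoint V ∘L P₁) (f n)‖ := by
        funext n
        rw [ContinuousLinearMap.comp_apply]
      rw [heq]
      exact hf2
    exact aux_key U V hcomp h1 g hmem hle hBg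
end

section
/- Suppose bounded operators U, V on H satisfy the orthogonality relations U U† + V V† = I = U† U + Vᵀ V̄ and U Vᵀ + V Uᵀ = 0 = U† V + Vᵀ Ū, V is Hilbert–Schmidt, and U is invertible. Then the operator X := V Ū⁻¹ satisfies X = −(U†)⁻¹ Vᵀ, X is Hilbert–Schmidt and skew symmetric (Xᵀ = −X); moreover X is invariant under right multiplication by unitaries: for every unitary operator S on H, (V S̄) (Ū S̄)⁻¹ = V Ū⁻¹, where Ū S̄ is the conjugate of the invertible operator U S. -/
open scoped InnerProductSpace
open ContinuousLinearMap

variable {H : Type*} [NormedAddCommGroup H] [InnerProductSpace ℂ H] [CompleteSpace H]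

lemma myParseval {ι : Type} (b : HilbertBasis ι ℂ H) (x : H) :
    HasSum (fun i => ‖⟪b i, x⟫_ℂ‖ ^ 2) (‖x‖ ^ 2) := by
  have h := (b.hasSum_inner_mul_inner x x).mapL Complex.reCLM
  have h1 : ∀ i, Complex.reCLM (⟪x, b i⟫_ℂ * ⟪b i, x⟫_ℂ) = ‖⟪b i, x⟫_ℂ‖ ^ 2 := by
    intro i
    rw [← inner_conj_symm x (b i), mul_comm, Complex.mul_conj]
    simp [Complex.normSq_eq_norm_sq, ← Complex.ofReal_pow]
  have h2 : Complex.reCLM ⟪x, x⟫_ℂ = ‖x‖ ^ 2 := by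
    simpa using (inner_self_eq_norm_sq (𝕜 := ℂ) x)
  simpa [h1, h2, ← Complex.ofReal_pow] using h

lemma myRingInverseEq {M₀ : Type*} [MonoidWithZero M₀] (a x : M₀)
    (h1 : a * x = 1) (h2 : x * a = 1) : Ring.inverse a = x := by
  have hu : IsUnit a := ⟨⟨a, x, h1, h2⟩, rfl⟩
  calc Ring.inverse a = Ring.inverse a * (a * x) := by rw [h1, mul_one]
  _ = (Ring.inverse a * a) * x := by rw [mul_assoc]
  _ = x := by rw [Ring.inverse_mul_cancel a hu, one_mul]

set_option linter.unusedSectionVars false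
set_option maxHeartbeats 1000000 in
lemma mySummableAdjoint {ι : Type} (e : HilbertBasis ι ℂ H) (A : H →L[ℂ] H)
    (h : Summable fun i => ‖A (e i)‖ ^ 2) :
    Summable fun j => ‖ContinuousLinearMap.adjoint A (e j)‖ ^ 2 := by
  have hrow : ∀ i, HasSum (fun j => ‖⟪e j, A (e i)⟫_ℂ‖ ^ 2) (‖A (e i)‖ ^ 2) :=
    fun i => myParseval e (A (e i))
  have hFsum : Summable (fun p : ι × ι => ‖⟪e p.2, A (e p.1)⟫_ℂ‖ ^ 2) := by
    rw [summable_prod_of_nonneg (fun p => by positivity)]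
    exact ⟨fun i => (hrow i).summable, by
      simpa only [fun i => (hrow i).tsum_eq] using h⟩
  have hswap : Summable (fun p : ι × ι => ‖⟪e p.1, A (e p.2)⟫_ℂ‖ ^ 2) :=
    ((Equiv.prodComm ι ι).summable_iff).mpr hFsum
  have hGeq : (fun p : ι × ι => ‖⟪e p.1, A (e p.2)⟫_ℂ‖ ^ 2) =
      fun p : ι × ι => ‖⟪e p.2, ContinuousLinearMap.adjoint A (e p.1)⟫_ℂ‖ ^ 2 := by
    funext p
    have h5 : ⟪e p.1, A (e p.2)⟫_ℂ = ⟪ContinuousLinearMap.adjoint A (e p.1), e p.2⟫_ℂ :=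
      (ContinuousLinearMap.adjoint_inner_left A (e p.2) (e p.1)).symm
    rw [h5, ← inner_conj_symm (e p.2), RCLike.norm_conj]
  rw [hGeq] at hswap
  have h6 := (summable_prod_of_nonneg (f := fun p : ι × ι =>
      ‖⟪e p.2, ContinuousLinearMap.adjoint A (e p.1)⟫_ℂ‖ ^ 2) (fun p => by positivity)).mp hswap
  have htsum : ∀ j, (∑' i, ‖⟪e i, ContinuousLinearMap.adjoint A (e j)⟫_ℂ‖ ^ 2)
      = ‖ContinuousLinearMap.adjoint A (e j)‖ ^ 2 :=
    fun j => (myParseval e (ContinuousLinearMap.adjoint A (e j))).tsum_eq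
  simpa only [htsum] using h6.2

lemma myHSCompLeft (A B : H →L[ℂ] H) (h : ∃ (ι : Type) (e : HilbertBasis ι ℂ H),
      Summable fun i => ‖A (e i)‖ ^ 2) :
    ∃ (ι : Type) (e : HilbertBasis ι ℂ H), Summable fun i => ‖(B ∘L A) (e i)‖ ^ 2 := by
  obtain ⟨ι, e, he⟩ := h
  refine ⟨ι, e, ?_⟩
  refine Summable.of_nonneg_of_le (fun i => by positivity) (fun i => ?_) (he.mul_left (‖B‖ ^ 2))
  have h1 : ‖B (A (e i))‖ ≤ ‖B‖ * ‖A (e i)‖ := B.le_opNorm _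
  calc ‖(B ∘L A) (e i)‖ ^ 2 ≤ (‖B‖ * ‖A (e i)‖) ^ 2 := by
        rw [ContinuousLinearMap.comp_apply]
        exact pow_le_pow_left₀ (norm_nonneg _) h1 2
  _ = ‖B‖ ^ 2 * ‖A (e i)‖ ^ 2 := by ring

noncomputable def conjCLM (J : H → H)
    (hJ_add : ∀ f g, J (f + g) = J f + J g)
    (hJ_smul : ∀ (c : ℂ) (f : H), J (c • f) = (starRingEnd ℂ) c • J f)
    (hJ_norm : ∀ f, ‖J f‖ = ‖f‖)
    (A : H →L[ℂ] H) : H →L[ℂ] H :=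
  LinearMap.mkContinuous
    { toFun := fun f => J (A (J f))
      map_add' := fun f g => by
        show J (A (J (f + g))) = J (A (J f)) + J (A (J g))
        rw [hJ_add, map_add, hJ_add]
      map_smul' := fun c f => by
        show J (A (J (c • f))) = c • J (A (J f))
        rw [hJ_smul, map_smul, hJ_smul]; simp }
    ‖A‖ (fun f => by
      show ‖J (A (J f))‖ ≤ ‖A‖ * ‖f‖
      rw [hJ_norm]
      calc ‖A (J f)‖ ≤ ‖A‖ * ‖J f‖ := A.le_opNorm _
      _ = ‖A‖ * ‖f‖ := by rw [hJ_norm])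

@[simp] lemma conjCLM_apply (J : H → H) (hJ_add) (hJ_smul) (hJ_norm) (A : H →L[ℂ] H) (f : H) :
    conjCLM J hJ_add hJ_smul hJ_norm A f = J (A (J f)) := rfl


set_option maxHeartbeats 800000 in
/-- For an orthogonal pair `(U,V)` with `V` Hilbert–Schmidt and `U`
invertible, `X := V Ū⁻¹` satisfies `X = −(U†)⁻¹ Vᵀ`, is Hilbert–Schmidt and skew
symmetric (`Xᵀ = −X`), and is invariant under right multiplication by unitaries:
`(V S̄)(Ū S̄)⁻¹ = V Ū⁻¹` for every unitary `S`. -/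
theorem X_skew_and_invariant
    [TopologicalSpace.SeparableSpace H]
    -- the antiunitary involution `f ↦ f* = J f`
    (J : H → H)
    (hJ_add : ∀ f g, J (f + g) = J f + J g)
    (hJ_smul : ∀ (c : ℂ) (f : H), J (c • f) = (starRingEnd ℂ) c • J f)
    (hJ_invol : ∀ f, J (J f) = f)
    (hJ_inner : ∀ f g : H, ⟪J f, J g⟫_ℂ = ⟪g, f⟫_ℂ)
    (U V Ubar Vbar Ut Vt : H →L[ℂ] H)
    (hUbar : ∀ f, Ubar f = J (U (J f)))
    (hVbar : ∀ f, Vbar f = J (V (J f)))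
    (hUt : ∀ f, Ut f = J (adjoint U (J f)))
    (hVt : ∀ f, Vt f = J (adjoint V (J f)))
    -- the orthogonality relations
    (h1 : U ∘L adjoint U + V ∘L adjoint V = 1)
    (h2 : adjoint U ∘L U + Vt ∘L Vbar = 1)
    (h3 : U ∘L Vt + V ∘L Ut = 0)
    (h4 : adjoint U ∘L V + Vt ∘L Ubar = 0)
    (hV : IsHilbertSchmidt V)
    -- `U` is invertible
    (hU : IsUnit U)
    -- the transpose of `X = V Ū⁻¹`
    (Xt : H →L[ℂ] H)
    (hXt : ∀ f, Xt f = J (adjoint (V ∘L Ring.inverse Ubar) (J f))) :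
    V ∘L Ring.inverse Ubar = -(Ring.inverse (adjoint U) ∘L Vt) ∧
    IsHilbertSchmidt (V ∘L Ring.inverse Ubar) ∧
    Xt = -(V ∘L Ring.inverse Ubar) ∧
    (∀ S Sbar : H →L[ℂ] H, adjoint S ∘L S = 1 → S ∘L adjoint S = 1 →
      (∀ f, Sbar f = J (S (J f))) →
      (V ∘L Sbar) ∘L Ring.inverse (Ubar ∘L Sbar) = V ∘L Ring.inverse Ubar) := by
  have hJ_norm : ∀ f, ‖J f‖ = ‖f‖ := by
    intro f
    rw [norm_eq_sqrt_re_inner (𝕜 := ℂ) (J f), norm_eq_sqrt_re_inner (𝕜 := ℂ) f, hJ_inner f f]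
  set C : (H →L[ℂ] H) → (H →L[ℂ] H) := conjCLM J hJ_add hJ_smul hJ_norm with hC
  have hCapp : ∀ (A : H →L[ℂ] H) f, C A f = J (A (J f)) := fun A f => rfl
  have hCmul : ∀ A B : H →L[ℂ] H, C (A * B) = C A * C B := by
    intro A B; ext f
    simp only [ContinuousLinearMap.mul_apply, hCapp, hJ_invol]
  have hCone : C 1 = 1 := by
    ext f; simp only [hCapp, ContinuousLinearMap.one_apply, hJ_invol]
  have hCC : ∀ A : H →L[ℂ] H, C (C A) = A := by
    intro A; ext f; simp only [hCapp, hJ_invol]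
  have hCadj : ∀ A : H →L[ℂ] H,
      adjoint (C A) = C (adjoint A) := by
    intro A
    symm
    rw [ContinuousLinearMap.eq_adjoint_iff]
    intro x y
    rw [hCapp, hCapp]
    calc ⟪J (adjoint A (J x)), y⟫_ℂ = ⟪J (adjoint A (J x)), J (J y)⟫_ℂ := by rw [hJ_invol]
    _ = ⟪J y, adjoint A (J x)⟫_ℂ := hJ_inner _ _
    _ = ⟪A (J y), J x⟫_ℂ := ContinuousLinearMap.adjoint_inner_right A (J y) (J x)
    _ = ⟪J (J x), J (A (J y))⟫_ℂ := (hJ_inner _ _).symm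
    _ = ⟪x, J (A (J y))⟫_ℂ := by rw [hJ_invol]
  have hCunit : ∀ A : H →L[ℂ] H, IsUnit A → IsUnit (C A) := by
    intro A hA
    obtain ⟨u, rfl⟩ := hA
    exact ⟨⟨C u, C ↑u⁻¹,
      by rw [← hCmul, u.mul_inv, hCone], by rw [← hCmul, u.inv_mul, hCone]⟩, rfl⟩
  have hCinv : ∀ A : H →L[ℂ] H, IsUnit A → C (Ring.inverse A) = Ring.inverse (C A) := by
    intro A hA
    refine (myRingInverseEq _ _ ?_ ?_).symm
    · rw [← hCmul, Ring.mul_inverse_cancel A hA, hCone]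
    · rw [← hCmul, Ring.inverse_mul_cancel A hA, hCone]
  have hadj_mul : ∀ A B : H →L[ℂ] H, adjoint (A * B) = adjoint B * adjoint A := by
    intro A B
    rw [ContinuousLinearMap.mul_def, ContinuousLinearMap.mul_def,
      ContinuousLinearMap.adjoint_comp]
  have hadj_one : adjoint (1 : H →L[ℂ] H) = 1 := by
    rw [ContinuousLinearMap.one_def, ContinuousLinearMap.adjoint_id]
  have hAdjUnit : ∀ A : H →L[ℂ] H, IsUnit A → IsUnit (adjoint A) := by
    intro A hA
    obtain ⟨u, rfl⟩ := hA
    refine ⟨⟨adjoint ↑u, adjoint ↑u⁻¹, ?_, ?_⟩, rfl⟩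
    · rw [← hadj_mul, u.inv_mul, hadj_one]
    · rw [← hadj_mul, u.mul_inv, hadj_one]
  have hadjinv : ∀ A : H →L[ℂ] H, IsUnit A →
      adjoint (Ring.inverse A) = Ring.inverse (adjoint A) := by
    intro A hA
    refine (myRingInverseEq _ _ ?_ ?_).symm
    · rw [← hadj_mul, Ring.inverse_mul_cancel A hA, hadj_one]
    · rw [← hadj_mul, Ring.mul_inverse_cancel A hA, hadj_one]
  have hUbar' : Ubar = C U := by ext f; rw [hUbar f]; rfl
  have hVt' : Vt = C (adjoint V) := by ext f; rw [hVt f]; rfl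
  have hUbarU : IsUnit Ubar := hUbar' ▸ hCunit U hU
  have hadjU : IsUnit (adjoint U) := hAdjUnit U hU
  have h4' : adjoint U * V + Vt * Ubar = 0 := by
    rw [ContinuousLinearMap.mul_def, ContinuousLinearMap.mul_def]; exact h4
  have hUV : adjoint U * V = -(Vt * Ubar) := by
    have := h4'
    linear_combination (norm := abel) this
  -- Claim 1
  have claim1 : V * Ring.inverse Ubar = -(Ring.inverse (adjoint U) * Vt) := by
    refine hadjU.mul_left_cancel ?_
    calc adjoint U * (V * Ring.inverse Ubar)
        = (adjoint U * V) * Ring.inverse Ubar := (mul_assoc _ _ _).symm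
      _ = -(Vt * Ubar) * Ring.inverse Ubar := by rw [hUV]
      _ = -(Vt * (Ubar * Ring.inverse Ubar)) := by rw [neg_mul, mul_assoc]
      _ = -Vt := by rw [Ring.mul_inverse_cancel Ubar hUbarU, mul_one]
      _ = adjoint U * -(Ring.inverse (adjoint U) * Vt) := by
          rw [mul_neg, ← mul_assoc, Ring.mul_inverse_cancel _ hadjU, one_mul]
  -- Claim 2 : Hilbert-Schmidt
  have hXadj : adjoint (V * Ring.inverse Ubar)
      = Ring.inverse (adjoint Ubar) * adjoint V := by
    rw [hadj_mul, hadjinv Ubar hUbarU]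
  have claim2 : IsHilbertSchmidt (V ∘L Ring.inverse Ubar) := by
    obtain ⟨ι, e, he⟩ := hV
    have h1' : Summable fun i => ‖adjoint V (e i)‖ ^ 2 := mySummableAdjoint e V he
    have h2' := myHSCompLeft (adjoint V) (Ring.inverse (adjoint Ubar)) ⟨ι, e, h1'⟩
    obtain ⟨κ, f, hf⟩ := h2'
    refine ⟨κ, f, ?_⟩
    have h3' := mySummableAdjoint f _ hf
    have h4'' : adjoint (Ring.inverse (adjoint Ubar) ∘L adjoint V)
        = V ∘L Ring.inverse Ubar := by
      rw [← ContinuousLinearMap.mul_def, ← ContinuousLinearMap.mul_def, ← hXadj,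
        ContinuousLinearMap.adjoint_adjoint]
    rwa [h4''] at h3'
  -- Claim 3
  have hXt' : Xt = C (adjoint (V ∘L Ring.inverse Ubar)) := by
    ext f; rw [hXt f]; rfl
  have hcadjUbar : C (adjoint Ubar) = adjoint U := by
    rw [hUbar', hCadj U, hCC]
  have claim3 : Xt = -(V ∘L Ring.inverse Ubar) := by
    rw [hXt']
    show C (adjoint (V * Ring.inverse Ubar)) = -(V * Ring.inverse Ubar)
    rw [hXadj, hCmul, hCinv _ (hAdjUnit Ubar hUbarU), hcadjUbar, ← hVt', claim1, neg_neg]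
  refine ⟨by simpa only [← ContinuousLinearMap.mul_def] using claim1, claim2, claim3, ?_⟩
  -- Claim 4
  intro S Sbar hS1 hS2 hSbar
  have hSbar' : Sbar = C S := by ext f; rw [hSbar f]; rfl
  have hSunit : IsUnit S :=
    ⟨⟨S, adjoint S, by rw [ContinuousLinearMap.mul_def]; exact hS2,
      by rw [ContinuousLinearMap.mul_def]; exact hS1⟩, rfl⟩
  have hSbarU : IsUnit Sbar := hSbar' ▸ hCunit S hSunit
  have hinvUS : Ring.inverse (Ubar * Sbar) = Ring.inverse Sbar * Ring.inverse Ubar := by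
    refine myRingInverseEq _ _ ?_ ?_
    · calc Ubar * Sbar * (Ring.inverse Sbar * Ring.inverse Ubar)
          = Ubar * Sbar * Ring.inverse Sbar * Ring.inverse Ubar := (mul_assoc _ _ _).symm
        _ = Ubar * Ring.inverse Ubar := by rw [Ring.mul_inverse_cancel_right Sbar Ubar hSbarU]
        _ = 1 := Ring.mul_inverse_cancel Ubar hUbarU
    · calc Ring.inverse Sbar * Ring.inverse Ubar * (Ubar * Sbar)
          = Ring.inverse Sbar * (Ring.inverse Ubar * (Ubar * Sbar)) := mul_assoc _ _ _
        _ = Ring.inverse Sbar * Sbar := by rw [Ring.inverse_mul_cancel_left Ubar Sbar hUbarU]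
        _ = 1 := Ring.inverse_mul_cancel Sbar hSbarU
  show (V * Sbar) * Ring.inverse (Ubar * Sbar) = V * Ring.inverse Ubar
  rw [hinvUS]
  calc (V * Sbar) * (Ring.inverse Sbar * Ring.inverse Ubar)
      = V * (Sbar * (Ring.inverse Sbar * Ring.inverse Ubar)) := mul_assoc _ _ _
    _ = V * Ring.inverse Ubar := by rw [Ring.mul_inverse_cancel_left Sbar _ hSbarU]
end

section
/- Let X be a skew-symmetric (Xᵀ = −X) Hilbert–Schmidt operator on H. Define L := (I + X X†)^{−1/2} (the inverse of the positive square root of the positive invertible operator I + X X†) and W := X (I + X† X)^{−1/2}. Then L is positive, W is skew symmetric (Wᵀ = −W), the pair (L, W) satisfies the orthogonality relations L L† + W W† = I = L† L + Wᵀ W̄ and L Wᵀ + W Lᵀ = 0 = L† W + Wᵀ L̄, and W L̄⁻¹ = X. -/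
open scoped InnerProductSpace
open ContinuousLinearMap

variable {H : Type*} [NormedAddCommGroup H] [InnerProductSpace ℂ H] [CompleteSpace H]

open Polynomial in
private lemma aux_poly_semiconj {A : Type*} [Ring A] [Algebra ℝ A]
    (a b x : A) (h : x * a = b * x) (p : ℝ[X]) :
    x * aeval a p = aeval b p * x := by
  induction p using Polynomial.induction_on' with
  | add p q hp hq => simp only [map_add, mul_add, add_mul, hp, hq]
  | monomial n c =>
    have hpow : x * a ^ n = b ^ n * x := SemiconjBy.pow_right h n
    simp only [aeval_monomial]
    calc x * (algebraMap ℝ A c * a ^ n)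
        = (x * algebraMap ℝ A c) * a ^ n := by rw [mul_assoc]
      _ = (algebraMap ℝ A c * x) * a ^ n := by rw [← Algebra.commutes]
      _ = algebraMap ℝ A c * (x * a ^ n) := by rw [mul_assoc]
      _ = algebraMap ℝ A c * (b ^ n * x) := by rw [hpow]
      _ = algebraMap ℝ A c * b ^ n * x := by rw [mul_assoc]

private lemma aux_exists_poly_approx (M : ℝ) {ε : ℝ} (hε : 0 < ε) :
    ∃ p : Polynomial ℝ, ∀ t ∈ Set.Icc (0:ℝ) M, |Real.sqrt t - p.eval t| ≤ ε := by
  set s : Set ℝ := Set.Icc (0:ℝ) M with hs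
  let g : C(s, ℝ) := ⟨fun t => Real.sqrt t, Real.continuous_sqrt.comp continuous_subtype_val⟩
  have hmem : g ∈ (polynomialFunctions s).topologicalClosure := by
    rw [polynomialFunctions.topologicalClosure s]
    exact Algebra.mem_top
  have hmem' : g ∈ closure (polynomialFunctions s : Set C(s, ℝ)) := hmem
  obtain ⟨h, hh, hdist⟩ := Metric.mem_closure_iff.mp hmem' ε hε
  obtain ⟨p, -, rfl⟩ := Subalgebra.mem_map.mp hh
  refine ⟨p, fun t ht => ?_⟩
  have := ContinuousMap.dist_apply_le_dist (f := g)
    (g := (Polynomial.toContinuousMapOnAlgHom s) p) (⟨t, ht⟩ : s)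
  have h2 : dist (g ⟨t, ht⟩) ((Polynomial.toContinuousMapOnAlgHom s) p ⟨t, ht⟩) ≤ ε :=
    le_trans this (le_of_lt hdist)
  simpa [g, Real.dist_eq, Polynomial.toContinuousMapOnAlgHom_apply,
    Polynomial.toContinuousMapOn_apply, Polynomial.toContinuousMap_apply] using h2

private lemma aux_intertwine_cfc_sqrt (a b x : H →L[ℂ] H) (ha : 0 ≤ a) (hb : 0 ≤ b)
    (h : x * a = b * x) :
    x * cfc Real.sqrt a = cfc Real.sqrt b * x := by
  have hsa : IsSelfAdjoint a := IsSelfAdjoint.of_nonneg ha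
  have hsb : IsSelfAdjoint b := IsSelfAdjoint.of_nonneg hb
  set c : ℝ := ‖(1 : H →L[ℂ] H)‖ with hc
  set M : ℝ := max (‖a‖ * c) (‖b‖ * c) with hM
  have hspa : spectrum ℝ a ⊆ Set.Icc (0:ℝ) M := by
    intro t ht
    refine ⟨spectrum_nonneg_of_nonneg ha ht, ?_⟩
    have h1 := spectrum.subset_closedBall_norm_mul (𝕜 := ℝ) a ht
    rw [Metric.mem_closedBall, dist_zero_right, Real.norm_eq_abs] at h1
    exact le_trans (le_abs_self t) (le_trans h1 (le_max_left _ _))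
  have hspb : spectrum ℝ b ⊆ Set.Icc (0:ℝ) M := by
    intro t ht
    refine ⟨spectrum_nonneg_of_nonneg hb ht, ?_⟩
    have h1 := spectrum.subset_closedBall_norm_mul (𝕜 := ℝ) b ht
    rw [Metric.mem_closedBall, dist_zero_right, Real.norm_eq_abs] at h1
    exact le_trans (le_abs_self t) (le_trans h1 (le_max_right _ _))
  have key : ∀ ε : ℝ, 0 < ε → ‖x * cfc Real.sqrt a - cfc Real.sqrt b * x‖ ≤ 2 * (ε * ‖x‖) := by
    intro ε hε
    obtain ⟨p, hp⟩ := aux_exists_poly_approx M hε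
    have hca : ‖cfc Real.sqrt a - Polynomial.aeval a p‖ ≤ ε := by
      rw [← cfc_polynomial p a hsa, ← cfc_sub Real.sqrt p.eval a
        Real.continuous_sqrt.continuousOn (Polynomial.continuous p).continuousOn]
      exact norm_cfc_le hε.le fun t ht => by
        simpa [Real.norm_eq_abs] using hp t (hspa ht)
    have hcb : ‖cfc Real.sqrt b - Polynomial.aeval b p‖ ≤ ε := by
      rw [← cfc_polynomial p b hsb, ← cfc_sub Real.sqrt p.eval b
        Real.continuous_sqrt.continuousOn (Polynomial.continuous p).continuousOn]
      exact norm_cfc_le hε.le fun t ht => by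
        simpa [Real.norm_eq_abs] using hp t (hspb ht)
    have hxp := aux_poly_semiconj a b x h p
    have hsplit : x * cfc Real.sqrt a - cfc Real.sqrt b * x
        = x * (cfc Real.sqrt a - Polynomial.aeval a p)
          - (cfc Real.sqrt b - Polynomial.aeval b p) * x := by
      rw [mul_sub, sub_mul, hxp]; abel
    rw [hsplit]
    calc ‖x * (cfc Real.sqrt a - Polynomial.aeval a p)
          - (cfc Real.sqrt b - Polynomial.aeval b p) * x‖
        ≤ ‖x * (cfc Real.sqrt a - Polynomial.aeval a p)‖
          + ‖(cfc Real.sqrt b - Polynomial.aeval b p) * x‖ := norm_sub_le _ _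
      _ ≤ ‖x‖ * ε + ε * ‖x‖ := by
          refine add_le_add (le_trans (norm_mul_le _ _) ?_) (le_trans (norm_mul_le _ _) ?_)
          · exact mul_le_mul_of_nonneg_left hca (norm_nonneg x)
          · exact mul_le_mul_of_nonneg_right hcb (norm_nonneg x)
      _ = 2 * (ε * ‖x‖) := by ring
  have h0 : ‖x * cfc Real.sqrt a - cfc Real.sqrt b * x‖ ≤ 0 := by
    refine le_of_forall_pos_le_add fun ε hε => ?_
    have hden : (0:ℝ) < 2 * ‖x‖ + 1 := by positivity
    have := key (ε / (2 * ‖x‖ + 1)) (by positivity)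
    rw [zero_add]
    refine le_trans this ?_
    rw [div_mul_eq_mul_div, mul_div_assoc]
    have hx0 : (0:ℝ) ≤ ‖x‖ := norm_nonneg x
    calc 2 * (ε * (‖x‖ / (2 * ‖x‖ + 1))) = ε * (2 * ‖x‖ / (2 * ‖x‖ + 1)) := by ring
      _ ≤ ε * 1 := by
          refine mul_le_mul_of_nonneg_left ?_ hε.le
          rw [div_le_one hden]; linarith
      _ = ε := mul_one ε
  exact sub_eq_zero.mp (norm_le_zero_iff.mp h0)

private lemma aux_cfc_sqrt_mul_self (c : H →L[ℂ] H) (hc : 0 ≤ c) :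
    cfc Real.sqrt (c * c) = c := by
  have hsc : IsSelfAdjoint c := IsSelfAdjoint.of_nonneg hc
  have h1 : c * c = c ^ 2 := (sq c).symm
  rw [h1, ← cfc_pow_id (R := ℝ) c 2 hsc,
    ← cfc_comp Real.sqrt (fun x : ℝ => x ^ 2) c hsc Real.continuous_sqrt.continuousOn
      (by fun_prop)]
  have heq : (spectrum ℝ c).EqOn (Real.sqrt ∘ fun x : ℝ => x ^ 2) id := fun t ht => by
    simp [Function.comp, Real.sqrt_sq (spectrum_nonneg_of_nonneg hc ht)]
  rw [cfc_congr heq, cfc_id ℝ c hsc]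

private lemma aux_pos_sqrt_unique (c d : H →L[ℂ] H) (hc : 0 ≤ c) (hd : 0 ≤ d)
    (h : c * c = d * d) : c = d := by
  rw [← aux_cfc_sqrt_mul_self c hc, h, aux_cfc_sqrt_mul_self d hd]

set_option maxHeartbeats 2000000 in
/-- For a skew-symmetric Hilbert–Schmidt operator `X`, the operators
`L := (I + X X†)^{−1/2}` (characterized as the positive operator with
`L² (I + X X†) = I`) and `W := X (I + X† X)^{−1/2}` satisfy: `L` is positive, `W` is skew
symmetric, the pair `(L, W)` satisfies the orthogonality relations, and `W L̄⁻¹ = X`. -/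
theorem lift_of_X
    [TopologicalSpace.SeparableSpace H]
    -- the antiunitary involution `f ↦ f* = J f`
    (J : H → H)
    (hJ_add : ∀ f g, J (f + g) = J f + J g)
    (hJ_smul : ∀ (c : ℂ) (f : H), J (c • f) = (starRingEnd ℂ) c • J f)
    (hJ_invol : ∀ f, J (J f) = f)
    (hJ_inner : ∀ f g : H, ⟪J f, J g⟫_ℂ = ⟪g, f⟫_ℂ)
    -- `X` is skew symmetric and Hilbert–Schmidt
    (X Xt : H →L[ℂ] H)
    (hXt : ∀ f, Xt f = J (adjoint X (J f)))
    (hXskew : Xt = -X)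
    (hXHS : IsHilbertSchmidt X)
    -- `L = (I + X X†)^{-1/2}`: the inverse of the positive square root of `I + X X†`
    (L : H →L[ℂ] H)
    (hLpos : L.IsPositive)
    (hLsq : (L ∘L L) ∘L (1 + X ∘L adjoint X) = 1)
    -- `L' = (I + X† X)^{-1/2}`, so that `W = X L'`
    (L' : H →L[ℂ] H)
    (hL'pos : L'.IsPositive)
    (hL'sq : (L' ∘L L') ∘L (1 + adjoint X ∘L X) = 1)
    (W : H →L[ℂ] H)
    (hW : W = X ∘L L')
    -- conjugates and transposes of `L` and `W`
    (Lbar Lt Wbar Wt : H →L[ℂ] H)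
    (hLbar : ∀ f, Lbar f = J (L (J f)))
    (hLt : ∀ f, Lt f = J (adjoint L (J f)))
    (hWbar : ∀ f, Wbar f = J (W (J f)))
    (hWt : ∀ f, Wt f = J (adjoint W (J f))) :
    L.IsPositive ∧
    Wt = -W ∧
    L ∘L adjoint L + W ∘L adjoint W = 1 ∧
    adjoint L ∘L L + Wt ∘L Wbar = 1 ∧
    L ∘L Wt + W ∘L Lt = 0 ∧
    adjoint L ∘L W + Wt ∘L Lbar = 0 ∧
    W ∘L Ring.inverse Lbar = X := by
  classical
  -- basic facts about `J`
  have hJ0 : J 0 = 0 := by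
    have h := hJ_add 0 0
    rw [add_zero] at h
    exact left_eq_add.mp h
  have hJneg : ∀ f, J (-f) = -(J f) := fun f => by
    have h := hJ_add f (-f)
    rw [add_neg_cancel, hJ0] at h
    exact eq_neg_of_add_eq_zero_left (by rw [add_comm]; exact h.symm)
  -- skew-symmetry of `X`, in pointwise forms
  have hXJ : ∀ f, J (adjoint X (J f)) = -(X f) := fun f => by
    rw [← hXt f, hXskew]; simp
  have hXadJ : ∀ g, J (adjoint X g) = -(X (J g)) := fun g => by
    simpa [hJ_invol] using hXJ (J g)
  have hXbar : ∀ g, J (X (J g)) = -(adjoint X g) := fun g => by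
    have h := congrArg J (hXadJ g)
    rw [hJ_invol, hJneg] at h
    rw [h, neg_neg]
  have hXg : ∀ g, J (X g) = -(adjoint X (J g)) := fun g => by
    simpa [hJ_invol] using hXbar (J g)
  -- self-adjointness
  have hLsa : IsSelfAdjoint L := hLpos.isSelfAdjoint
  have hL'sa : IsSelfAdjoint L' := hL'pos.isSelfAdjoint
  have hL0 : (0 : H →L[ℂ] H) ≤ L := (ContinuousLinearMap.nonneg_iff_isPositive L).mpr hLpos
  have hL'0 : (0 : H →L[ℂ] H) ≤ L' := (ContinuousLinearMap.nonneg_iff_isPositive L').mpr hL'pos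
  -- ring formulations
  have hLsq' : L * L * (1 + X * adjoint X) = 1 := by
    simp only [ContinuousLinearMap.mul_def]; exact hLsq
  have hL'sq' : L' * L' * (1 + adjoint X * X) = 1 := by
    simp only [ContinuousLinearMap.mul_def]; exact hL'sq
  have hW' : W = X * L' := by simp only [ContinuousLinearMap.mul_def]; exact hW
  have hA1 : (1 + X * adjoint X) * (L * L) = 1 := by
    have h := congrArg star hLsq'
    simpa [star_mul, star_add, star_one, star_eq_adjoint, adjoint_adjoint, hLsa.adjoint_eq,
      mul_assoc] using h
  have hB1 : (1 + adjoint X * X) * (L' * L') = 1 := by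
    have h := congrArg star hL'sq'
    simpa [star_mul, star_add, star_one, star_eq_adjoint, adjoint_adjoint, hL'sa.adjoint_eq,
      mul_assoc] using h
  -- intertwining of squares
  have hABX : X * (1 + adjoint X * X) = (1 + X * adjoint X) * X := by noncomm_ring
  have hsqX : L * L * X = X * (L' * L') := by
    calc L * L * X
        = L * L * (X * ((1 + adjoint X * X) * (L' * L'))) := by rw [hB1, mul_one]
      _ = L * L * ((X * (1 + adjoint X * X)) * (L' * L')) := by rw [mul_assoc X]
      _ = L * L * (((1 + X * adjoint X) * X) * (L' * L')) := by rw [hABX]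
      _ = (L * L * (1 + X * adjoint X)) * (X * (L' * L')) := by noncomm_ring
      _ = X * (L' * L') := by rw [hLsq', one_mul]
  -- `Lbar = L'`
  have hJB : ∀ f, J ((1 + adjoint X * X) f) = (1 + X * adjoint X) (J f) := fun f => by
    simp only [ContinuousLinearMap.add_apply, ContinuousLinearMap.one_apply,
      ContinuousLinearMap.mul_apply, hJ_add, hXadJ, hXg, map_neg, neg_neg]
  have hLbarB : Lbar * Lbar * (1 + adjoint X * X) = 1 := by
    ext f
    simp only [ContinuousLinearMap.mul_apply, ContinuousLinearMap.one_apply]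
    rw [hLbar, hLbar, hJ_invol, hJB]
    have h := congrArg (fun T : H →L[ℂ] H => T (J f)) hLsq'
    simp only [ContinuousLinearMap.mul_apply, ContinuousLinearMap.one_apply] at h
    rw [h, hJ_invol]
  have hLbar_sq : Lbar * Lbar = L' * L' := by
    calc Lbar * Lbar = Lbar * Lbar * ((1 + adjoint X * X) * (L' * L')) := by rw [hB1, mul_one]
      _ = (Lbar * Lbar * (1 + adjoint X * X)) * (L' * L') := by rw [← mul_assoc]
      _ = L' * L' := by rw [hLbarB, one_mul]
  have hLsym := ContinuousLinearMap.isSelfAdjoint_iff_isSymmetric.mp hLsa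
  have hLbar_pos : (0 : H →L[ℂ] H) ≤ Lbar := by
    rw [ContinuousLinearMap.nonneg_iff_isPositive]
    constructor
    · intro x y
      simp only [ContinuousLinearMap.coe_coe]
      calc ⟪Lbar x, y⟫_ℂ = ⟪J (L (J x)), J (J y)⟫_ℂ := by rw [hLbar, hJ_invol]
        _ = ⟪J y, L (J x)⟫_ℂ := hJ_inner _ _
        _ = ⟪L (J y), J x⟫_ℂ := (hLsym _ _).symm
        _ = ⟪J (J x), J (L (J y))⟫_ℂ := (hJ_inner _ _).symm
        _ = ⟪x, Lbar y⟫_ℂ := by rw [hJ_invol, ← hLbar]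
    · intro x
      have h2 : ⟪Lbar x, x⟫_ℂ = ⟪J x, L (J x)⟫_ℂ := by
        calc ⟪Lbar x, x⟫_ℂ = ⟪J (L (J x)), J (J x)⟫_ℂ := by rw [hLbar, hJ_invol]
          _ = ⟪J x, L (J x)⟫_ℂ := hJ_inner _ _
      have h3 := hLpos.inner_nonneg_right (J x)
      show (0:ℝ) ≤ RCLike.re ⟪Lbar x, x⟫_ℂ
      rw [h2]; exact (RCLike.nonneg_iff.mp h3).1
  have hbar : Lbar = L' := aux_pos_sqrt_unique Lbar L' hLbar_pos hL'0 hLbar_sq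
  -- the key intertwining relation `X L' = L X`
  have hLL0 : (0 : H →L[ℂ] H) ≤ L * L := by
    have := star_mul_self_nonneg L
    rwa [hLsa.star_eq] at this
  have hL'L'0 : (0 : H →L[ℂ] H) ≤ L' * L' := by
    have := star_mul_self_nonneg L'
    rwa [hL'sa.star_eq] at this
  have hkey : X * L' = L * X := by
    have h := aux_intertwine_cfc_sqrt (L' * L') (L * L) X hL'L'0 hLL0 hsqX.symm
    rwa [aux_cfc_sqrt_mul_self L' hL'0, aux_cfc_sqrt_mul_self L hL0] at h
  have hkeystar : L' * adjoint X = adjoint X * L := by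
    have h := congrArg star hkey
    simpa [star_mul, star_eq_adjoint, adjoint_adjoint, hLsa.adjoint_eq, hL'sa.adjoint_eq] using h
  -- pointwise conjugation facts for `L`, `L'`
  have hLbar_ap : ∀ f, J (L (J f)) = L' f := fun f => by rw [← hLbar f, hbar]
  have hL'conj : ∀ g, J (L' (J g)) = L g := fun g => by
    have h := hLbar_ap (J g)
    rw [hJ_invol] at h
    have h2 := congrArg J h.symm
    rwa [hJ_invol] at h2
  have hL'J : ∀ f, L' (J f) = J (L f) := fun f => by
    have h := congrArg J (hL'conj f)
    rwa [hJ_invol] at h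
  -- adjoint of W
  have hWadj : adjoint W = L' * adjoint X := by
    rw [hW, adjoint_comp, hL'sa.adjoint_eq, ← ContinuousLinearMap.mul_def]
  -- `Wt = -W`
  have hWt_eq : Wt = -(L * X) := by
    ext f
    rw [hWt f, hWadj]
    have h1 : adjoint X (J f) = -(J (X f)) := by
      have h := congrArg J (hXJ f)
      rwa [hJ_invol, hJneg] at h
    simp only [ContinuousLinearMap.mul_apply, h1, map_neg, hJneg,
      ContinuousLinearMap.neg_apply]
    rw [hL'conj (X f)]
  have hWt' : Wt = -W := by
    rw [hWt_eq, hW', ← hkey]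
  -- `Wbar`
  have hWbar_eq : Wbar = -(adjoint X * L) := by
    ext f
    rw [hWbar f, hW]
    simp only [ContinuousLinearMap.comp_apply, ContinuousLinearMap.neg_apply,
      ContinuousLinearMap.mul_apply]
    rw [hL'J f, hXbar (L f)]
  -- `Lt = L'`
  have hLt_eq : Lt = L' := by
    ext f
    rw [hLt f, hLsa.adjoint_eq, hLbar_ap f]
  -- orthogonality relation 1
  have hGoal3 : L * L + W * adjoint W = 1 := by
    rw [hWadj, hW']
    have e1 : X * L' * (L' * adjoint X) = X * (L' * L') * adjoint X := by noncomm_ring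
    rw [e1, show X * (L' * L') = L * L * X from hsqX.symm]
    have e2 : L * L + L * L * X * adjoint X = L * L * (1 + X * adjoint X) := by noncomm_ring
    rw [e2, hLsq']
  -- orthogonality relation 2
  have hGoal4 : L * L + Wt * Wbar = 1 := by
    have e1 : Wt * Wbar = X * (L' * L') * adjoint X := by
      rw [hWt', hW', hWbar_eq]
      calc -(X * L') * -(adjoint X * L) = X * (L' * (adjoint X * L)) := by noncomm_ring
        _ = X * (L' * (L' * adjoint X)) := by rw [hkeystar]
        _ = X * (L' * L') * adjoint X := by noncomm_ring
    rw [e1, show X * (L' * L') = L * L * X from hsqX.symm]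
    have e2 : L * L + L * L * X * adjoint X = L * L * (1 + X * adjoint X) := by noncomm_ring
    rw [e2, hLsq']
  -- orthogonality relation 3
  have hGoal5 : L * Wt + W * Lt = 0 := by
    rw [hWt', hW', hLt_eq]
    have e1 : L * -(X * L') = -((L * X) * L') := by noncomm_ring
    rw [e1, ← hkey]
    noncomm_ring
  -- orthogonality relation 4
  have hGoal6 : L * W + Wt * Lbar = 0 := by
    rw [hWt', hW', hbar]
    have e1 : L * (X * L') = (L * X) * L' := by noncomm_ring
    rw [e1, ← hkey]
    noncomm_ring
  -- `L'` is invertible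
  have hL'inv_r : L' * (L' * (1 + adjoint X * X)) = 1 := by
    rw [← mul_assoc]; exact hL'sq'
  have hL'inv_l : ((1 + adjoint X * X) * L') * L' = 1 := by
    rw [mul_assoc]; exact hB1
  have hUnit : IsUnit L' := by
    have heq : (1 + adjoint X * X) * L' = L' * (1 + adjoint X * X) :=
      left_inv_eq_right_inv hL'inv_l hL'inv_r
    refine ⟨⟨L', L' * (1 + adjoint X * X), hL'inv_r, ?_⟩, rfl⟩
    rw [← heq]
    exact hL'inv_l
  have hGoal7 : W * Ring.inverse Lbar = X := by
    rw [hbar, hW', mul_assoc, Ring.mul_inverse_cancel L' hUnit, mul_one]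
  refine ⟨hLpos, hWt', ?_, ?_, ?_, ?_, ?_⟩
  · rw [hLsa.adjoint_eq]; simp only [← ContinuousLinearMap.mul_def]; exact hGoal3
  · rw [hLsa.adjoint_eq]; simp only [← ContinuousLinearMap.mul_def]; exact hGoal4
  · simp only [← ContinuousLinearMap.mul_def]; exact hGoal5
  · rw [hLsa.adjoint_eq]; simp only [← ContinuousLinearMap.mul_def]; exact hGoal6
  · simp only [← ContinuousLinearMap.mul_def]; exact hGoal7
end

section
/- Let F : H × H → ℂ be an entire analytic function (analytic on all of H × H in the sense of analytic functions between complex Banach spaces). If F(ξ*, ξ) = 0 for every ξ ∈ H, then F is identically zero; equivalently, a function φ(ξ,η) on H × H that is antianalytic in ξ and analytic in η is uniquely determined by its values on the diagonal ξ = η. -/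
open scoped InnerProductSpace

private lemma aux_vanish_on_reals (f : ℂ → ℂ) (hf : ∀ z, AnalyticAt ℂ f z)
    (h : ∀ r : ℝ, f r = 0) : ∀ z, f z = 0 := by
  have hA : AnalyticOnNhd ℂ f Set.univ := fun z _ => hf z
  have htend : Filter.Tendsto (fun n : ℕ => Complex.ofReal (((n : ℝ) + 1)⁻¹)) Filter.atTop
      (nhdsWithin (0 : ℂ) {(0 : ℂ)}ᶜ) := by
    apply tendsto_nhdsWithin_of_tendsto_nhds_of_eventually_within
    · have h1 : Filter.Tendsto (fun n : ℕ => ((n : ℝ) + 1)⁻¹) Filter.atTop (nhds (0 : ℝ)) := by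
        simpa using (tendsto_one_div_add_atTop_nhds_zero_nat :
          Filter.Tendsto (fun n : ℕ => 1 / ((n : ℝ) + 1)) Filter.atTop (nhds 0))
      have h2 := (Complex.continuous_ofReal.tendsto 0).comp h1
      simp only [Complex.ofReal_zero] at h2
      exact h2
    · filter_upwards with n
      simp only [Set.mem_compl_iff, Set.mem_singleton_iff, Complex.ofReal_eq_zero]
      positivity
  have hfreq : ∃ᶠ z in nhdsWithin (0 : ℂ) {(0 : ℂ)}ᶜ, f z = 0 :=
    htend.frequently (Filter.Frequently.of_forall fun n => h (((n : ℝ) + 1)⁻¹))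
  have := hA.eqOn_zero_of_preconnected_of_frequently_eq_zero isPreconnected_univ
    (Set.mem_univ 0) hfreq
  intro z
  exact this (Set.mem_univ z)

/-- An entire analytic function `F : H × H → ℂ` vanishing on the
antiholomorphic diagonal `{(ξ*, ξ) : ξ ∈ H}` vanishes identically; equivalently, a
function antianalytic in the first and analytic in the second variable is determined by
its values on the diagonal. -/
theorem analytic_determined_on_diagonal
    {H : Type*} [NormedAddCommGroup H] [InnerProductSpace ℂ H] [CompleteSpace H]
    [TopologicalSpace.SeparableSpace H]
    -- the antiunitary involution `f ↦ f* = J f`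
    (J : H → H)
    (hJ_add : ∀ f g, J (f + g) = J f + J g)
    (hJ_smul : ∀ (c : ℂ) (f : H), J (c • f) = (starRingEnd ℂ) c • J f)
    (hJ_invol : ∀ f, J (J f) = f)
    (hJ_inner : ∀ f g : H, ⟪J f, J g⟫_ℂ = ⟪g, f⟫_ℂ)
    (F : H × H → ℂ)
    (hF : ∀ x : H × H, AnalyticAt ℂ F x)
    (h0 : ∀ ξ : H, F (J ξ, ξ) = 0) :
    ∀ x : H × H, F x = 0 := by
  rintro ⟨a, b⟩
  set ξ : H := J a with hξ
  set η : H := b - ξ with hη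
  set g : ℂ × ℂ → ℂ := fun p =>
    F (a + (p.1 - Complex.I * p.2) • J η, ξ + (p.1 + Complex.I * p.2) • η) with hg
  have hmap : ∀ p : ℂ × ℂ, AnalyticAt ℂ g p := by
    intro p
    apply (hF _).comp
    apply AnalyticAt.prod
    · exact analyticAt_const.add
        ((analyticAt_fst.sub (analyticAt_const.mul analyticAt_snd)).smul analyticAt_const)
    · exact analyticAt_const.add
        ((analyticAt_fst.add (analyticAt_const.mul analyticAt_snd)).smul analyticAt_const)
  have hreal : ∀ s t : ℝ, g (s, t) = 0 := by
    intro s t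
    have hz : ((s : ℂ) - Complex.I * t) = (starRingEnd ℂ) ((s : ℂ) + Complex.I * t) := by
      simp [Complex.conj_ofReal, mul_comm]
      ring
    have hJw : J (ξ + ((s : ℂ) + Complex.I * t) • η)
        = a + ((s : ℂ) - Complex.I * t) • J η := by
      rw [hJ_add, hJ_smul, ← hz, hξ, hJ_invol]
    have := h0 (ξ + ((s : ℂ) + Complex.I * t) • η)
    rw [hJw] at this
    simpa [hg] using this
  have step1 : ∀ t : ℝ, ∀ u : ℂ, g (u, (t : ℂ)) = 0 := by
    intro t
    apply aux_vanish_on_reals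
    · intro u
      exact (hmap (u, (t : ℂ))).curry_left
    · intro s; exact hreal s t
  have step2 : ∀ u v : ℂ, g (u, v) = 0 := by
    intro u
    apply aux_vanish_on_reals
    · intro v
      exact (hmap (u, v)).curry_right
    · intro t; exact step1 t u
  have key := step2 (1/2) (-Complex.I/2)
  have e1 : ((1/2 : ℂ) - Complex.I * (-Complex.I/2)) = 0 := by
    simp [Complex.I_mul_I]; ring_nf; simp [Complex.I_sq]
  have e2 : ((1/2 : ℂ) + Complex.I * (-Complex.I/2)) = 1 := by
    ring_nf; simp [Complex.I_sq]; ring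
  rw [hg] at key
  simp only [e1, e2, zero_smul, one_smul, add_zero] at key
  have : ξ + η = b := by rw [hη]; abel
  rwa [this] at key
end
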